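/- The absolute linear Harbourne constant for 8 lines equals −2: for every field K and every configuration 𝓛 of 8 mutually distinct lines in the projective plane over K, H_L(K,𝓛) ≥ −2, and there exists a configuration 𝓛 of 8 mutually distinct lines in the projective plane over ℂ with H_L(ℂ,𝓛) = −2 (for instance the Möbius–Kantor configuration with t_2 = 4, t_3 = 8). -/

import Mathlib

/-- Points of the projective plane over `K`. -/
abbrev PPoint (K : Type*) [Field K] := Projectivization K (Fin 3 → K)

/-- Lines of the projective plane over `K`: points of the projectivization of the dual space. -/
abbrev PLine (K : Type*) [Field K] := Projectivization K (Module.Dual K (Fin 3 → K))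

/-- A point lies on a line iff a representative functional of the line vanishes on a
representative vector of the point. -/
def OnLine {K : Type*} [Field K] (P : PPoint K) (L : PLine K) : Prop :=
  L.rep P.rep = 0

/-- The multiplicity of a point `P` with respect to a configuration `𝓛`:
the number of lines of `𝓛` passing through `P`. -/
noncomputable def mult {K : Type*} [Field K] (𝓛 : Finset (PLine K)) (P : PPoint K) : ℕ :=
  {L : PLine K | L ∈ 𝓛 ∧ OnLine P L}.ncard

/-- The singular points of a configuration: points lying on at least two of its lines. -/
def SingPts {K : Type*} [Field K] (𝓛 : Finset (PLine K)) : Set (PPoint K) :=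
  {P | 2 ≤ mult 𝓛 P}

/-- `tk 𝓛 k` is the number of points of multiplicity exactly `k` (used for `k ≥ 2`). -/
noncomputable def tk {K : Type*} [Field K] (𝓛 : Finset (PLine K)) (k : ℕ) : ℕ :=
  {P : PPoint K | mult 𝓛 P = k}.ncard

/-- The linear Harbourne constant of a configuration `𝓛` of lines:
`(d² − Σ_P m_𝓛(P)²)/s` where the sum runs over the `s` singular points of `𝓛`. -/
noncomputable def HL {K : Type*} [Field K] (𝓛 : Finset (PLine K)) : ℚ :=
  ((𝓛.card : ℚ) ^ 2 - ∑ᶠ P ∈ SingPts 𝓛, (mult 𝓛 P : ℚ) ^ 2) / ((SingPts 𝓛).ncard : ℚ)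


open Projectivization Module Finset

namespace HLaux
variable {K : Type*} [Field K]

variable {K : Type*} [Field K]

lemma onLine_mk_mk {v : Fin 3 → K} (hv : v ≠ 0) {f : Module.Dual K (Fin 3 → K)} (hf : f ≠ 0) :
    OnLine (Projectivization.mk K v hv) (Projectivization.mk K f hf) ↔ f v = 0 := by
  obtain ⟨a, ha⟩ := Projectivization.exists_smul_eq_mk_rep K v hv
  obtain ⟨b, hb⟩ := Projectivization.exists_smul_eq_mk_rep K f hf
  unfold OnLine
  rw [← ha, ← hb]
  simp only [LinearMap.smul_apply, map_smul, Units.smul_def, smul_eq_mul]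
  constructor
  · intro h
    have := mul_eq_zero.1 h
    rcases this with h' | h'
    · exact absurd h' (Units.ne_zero _)
    · rcases mul_eq_zero.1 h' with h'' | h''
      · exact absurd h'' (Units.ne_zero _)
      · exact h''
  · intro h; rw [h]; ring

lemma onLine_mk_left {v : Fin 3 → K} (hv : v ≠ 0) (L : PLine K) :
    OnLine (Projectivization.mk K v hv) L ↔ L.rep v = 0 := by
  conv_lhs => rw [← L.mk_rep]
  exact onLine_mk_mk hv L.rep_nonzero

lemma onLine_mk_right (P : PPoint K) {f : Module.Dual K (Fin 3 → K)} (hf : f ≠ 0) :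
    OnLine P (Projectivization.mk K f hf) ↔ f P.rep = 0 := by
  conv_lhs => rw [← P.mk_rep]
  exact onLine_mk_mk P.rep_nonzero hf

lemma exists_common (L L' : PLine K) : ∃ P, OnLine P L ∧ OnLine P L' := by
  set φ := (L.rep).prod (L'.rep) with hφ
  have h3 : finrank K (Fin 3 → K) = 3 := by
    simp [Module.finrank_fintype_fun_eq_card]
  have hrk := LinearMap.finrank_range_add_finrank_ker φ
  have hr : finrank K (LinearMap.range φ) ≤ 2 := by
    refine le_trans (Submodule.finrank_le _) ?_
    simp [Module.finrank_prod]
  have hk : LinearMap.ker φ ≠ ⊥ := by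
    intro h
    rw [h] at hrk
    simp [h3] at hrk
    omega
  obtain ⟨v, hv, hv0⟩ := Submodule.exists_mem_ne_zero_of_ne_bot hk
  refine ⟨Projectivization.mk K v hv0, ?_, ?_⟩
  · rw [onLine_mk_left]
    have : φ v = 0 := hv
    simpa [hφ, Prod.ext_iff] using congrArg Prod.fst this
  · rw [onLine_mk_left]
    have : φ v = 0 := hv
    simpa [hφ, Prod.ext_iff] using congrArg Prod.snd this

lemma unique_common {L L' : PLine K} (h : L ≠ L') {P Q : PPoint K}
    (hPL : OnLine P L) (hPL' : OnLine P L') (hQL : OnLine Q L) (hQL' : OnLine Q L') :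
    P = Q := by
  by_contra hPQ
  have hind : LinearIndependent K ![P.rep, Q.rep] := by
    have := (Projectivization.independent_pair_iff_ne P Q).mpr hPQ
    rw [Projectivization.independent_iff] at this
    convert this using 1
    ext i
    fin_cases i <;> rfl
    rfl
  set W : Submodule K (Fin 3 → K) := Submodule.span K {P.rep, Q.rep} with hWdef
  have hW : finrank K W = 2 := by
    have hfr := finrank_span_eq_card hind
    have : Set.range ![P.rep, Q.rep] = {P.rep, Q.rep} := by
      simp [Matrix.range_cons, Matrix.range_empty, Set.pair_comm]
    rw [this] at hfr
    simpa using hfr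
  have hmem : ∀ (f : Module.Dual K (Fin 3 → K)), f P.rep = 0 → f Q.rep = 0 →
      f ∈ W.dualAnnihilator := by
    intro f h1 h2
    rw [Submodule.mem_dualAnnihilator]
    intro w hw
    rw [Submodule.mem_span_pair] at hw
    obtain ⟨a, b, rfl⟩ := hw
    simp [h1, h2]
  have hfW : L.rep ∈ W.dualAnnihilator := hmem _ hPL hQL
  have hgW : L'.rep ∈ W.dualAnnihilator := hmem _ hPL' hQL'
  have hdim : finrank K W.dualAnnihilator = 1 := by
    have h2 : finrank K ((Fin 3 → K) ⧸ W) = finrank K W.dualAnnihilator :=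
      LinearEquiv.finrank_eq (Subspace.quotEquivAnnihilator W)
    have h3 := Submodule.finrank_quotient_add_finrank W
    have h4 : finrank K (Fin 3 → K) = 3 := by
      simp [Module.finrank_fintype_fun_eq_card]
    omega
  have hfne : (⟨L.rep, hfW⟩ : W.dualAnnihilator) ≠ 0 := by
    intro hc
    exact L.rep_nonzero (by simpa using congrArg Subtype.val hc)
  obtain ⟨c, hc⟩ := (finrank_eq_one_iff_of_nonzero' (⟨L.rep, hfW⟩ : W.dualAnnihilator) hfne).mp
      hdim ⟨L'.rep, hgW⟩
  have hc' : c • L.rep = L'.rep := congrArg Subtype.val hc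
  have hc0 : c ≠ 0 := by
    intro h0
    apply L'.rep_nonzero
    rw [← hc', h0, zero_smul]
  apply h
  conv_lhs => rw [← L.mk_rep]
  conv_rhs => rw [← L'.mk_rep]
  rw [Projectivization.mk_eq_mk_iff']
  exact ⟨c⁻¹, by rw [← hc', smul_smul, inv_mul_cancel₀ hc0, one_smul]⟩


open scoped Classical

noncomputable def pt (L L' : PLine K) : PPoint K := (exists_common L L').choose

lemma pt_left (L L' : PLine K) : OnLine (pt L L') L := (exists_common L L').choose_spec.1
lemma pt_right (L L' : PLine K) : OnLine (pt L L') L' := (exists_common L L').choose_spec.2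

noncomputable def FL (𝓛 : Finset (PLine K)) (P : PPoint K) : Finset (PLine K) :=
  𝓛.filter (fun L => OnLine P L)

lemma mem_FL {𝓛 : Finset (PLine K)} {P : PPoint K} {L : PLine K} :
    L ∈ FL 𝓛 P ↔ L ∈ 𝓛 ∧ OnLine P L := Finset.mem_filter

lemma mult_eq (𝓛 : Finset (PLine K)) (P : PPoint K) : mult 𝓛 P = (FL 𝓛 P).card := by
  rw [mult, ← Set.ncard_coe_finset]
  congr 1
  ext L
  simp [mem_FL]

lemma two_le_mult_pt {𝓛 : Finset (PLine K)} {L L' : PLine K} (hL : L ∈ 𝓛) (hL' : L' ∈ 𝓛)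
    (hne : L ≠ L') : 2 ≤ mult 𝓛 (pt L L') := by
  rw [mult_eq]
  have hsub : ({L, L'} : Finset (PLine K)) ⊆ FL 𝓛 (pt L L') := by
    intro M hM
    rcases Finset.mem_insert.1 hM with rfl | hM
    · exact mem_FL.2 ⟨hL, pt_left _ _⟩
    · rw [Finset.mem_singleton] at hM; subst hM; exact mem_FL.2 ⟨hL', pt_right _ _⟩
  calc 2 = ({L, L'} : Finset (PLine K)).card := (Finset.card_pair hne).symm
  _ ≤ _ := Finset.card_le_card hsub

lemma singPts_finite (𝓛 : Finset (PLine K)) : (SingPts 𝓛).Finite := by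
  apply Set.Finite.subset (Finset.finite_toSet ((𝓛.offDiag).image (fun p => pt p.1 p.2)))
  intro P hP
  have h2 : 2 ≤ mult 𝓛 P := hP
  rw [mult_eq] at h2
  have h1 : 1 < (FL 𝓛 P).card := by omega
  obtain ⟨L, hL, L', hL', hne⟩ := Finset.one_lt_card.mp h1
  rw [Finset.mem_coe, Finset.mem_image]
  refine ⟨(L, L'), Finset.mem_offDiag.2 ⟨(mem_FL.1 hL).1, (mem_FL.1 hL').1, hne⟩, ?_⟩
  exact unique_common hne (pt_left L L') (pt_right L L') (mem_FL.1 hL).2 (mem_FL.1 hL').2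

noncomputable def SF (𝓛 : Finset (PLine K)) : Finset (PPoint K) := (singPts_finite 𝓛).toFinset

lemma mem_SF {𝓛 : Finset (PLine K)} {P : PPoint K} : P ∈ SF 𝓛 ↔ 2 ≤ mult 𝓛 P := by
  simp [SF, SingPts]

lemma coe_SF (𝓛 : Finset (PLine K)) : ↑(SF 𝓛) = SingPts 𝓛 := (singPts_finite 𝓛).coe_toFinset

lemma sum_global (𝓛 : Finset (PLine K)) :
    ∑ P ∈ SF 𝓛, mult 𝓛 P * (mult 𝓛 P - 1) = 𝓛.card * 𝓛.card - 𝓛.card := by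
  rw [← Finset.offDiag_card]
  rw [Finset.card_eq_sum_card_fiberwise (f := fun p => pt p.1 p.2) (t := SF 𝓛)
    (fun p hp => by
      rw [Finset.mem_coe, Finset.mem_offDiag] at hp
      exact mem_SF.2 (two_le_mult_pt hp.1 hp.2.1 hp.2.2))]
  refine Finset.sum_congr rfl fun P hP => ?_
  have hfib : (𝓛.offDiag.filter fun p => pt p.1 p.2 = P) = (FL 𝓛 P).offDiag := by
    ext ⟨L, L'⟩
    simp only [Finset.mem_filter, Finset.mem_offDiag, mem_FL]
    constructor
    · rintro ⟨⟨hL, hL', hne⟩, hpt⟩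
      exact ⟨⟨hL, hpt ▸ pt_left L L'⟩, ⟨hL', hpt ▸ pt_right L L'⟩, hne⟩
    · rintro ⟨⟨hL, hOL⟩, ⟨hL', hOL'⟩, hne⟩
      exact ⟨⟨hL, hL', hne⟩, unique_common hne (pt_left L L') (pt_right L L') hOL hOL'⟩
  rw [hfib, Finset.offDiag_card, mult_eq]
  have h : ∀ n : ℕ, n * (n - 1) = n * n - n := fun n => by
    cases n with
    | zero => rfl
    | succ k => rw [Nat.succ_sub_one, Nat.mul_succ, Nat.add_sub_cancel]
  rw [h]

lemma sum_line {𝓛 : Finset (PLine K)} {L : PLine K} (hL : L ∈ 𝓛) :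
    ∑ P ∈ (SF 𝓛).filter (fun P => OnLine P L), (mult 𝓛 P - 1) = 𝓛.card - 1 := by
  rw [← Finset.card_erase_of_mem hL]
  rw [Finset.card_eq_sum_card_fiberwise (f := fun L' => pt L L')
    (t := (SF 𝓛).filter (fun P => OnLine P L)) (fun L' hL' => by
      rw [Finset.mem_coe, Finset.mem_erase] at hL'
      exact Finset.mem_filter.2
        ⟨mem_SF.2 (two_le_mult_pt hL hL'.2 (Ne.symm hL'.1)), pt_left L L'⟩)]
  refine Finset.sum_congr rfl fun P hP => ?_
  rw [Finset.mem_filter] at hP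
  have hfib : ((𝓛.erase L).filter fun L' => pt L L' = P) = (FL 𝓛 P).erase L := by
    ext L'
    simp only [Finset.mem_filter, Finset.mem_erase, mem_FL]
    constructor
    · rintro ⟨⟨hne, hL'⟩, hpt⟩
      exact ⟨hne, hL', hpt ▸ pt_right L L'⟩
    · rintro ⟨hne, hL', hOL'⟩
      exact ⟨⟨hne, hL'⟩, unique_common (Ne.symm hne) (pt_left L L') (pt_right L L') hP.2 hOL'⟩
  rw [hfib, Finset.card_erase_of_mem (mem_FL.2 ⟨hL, hP.2⟩), mult_eq]

end HLaux

namespace KeyProof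
variable {K : Type*} [Field K]
open HLaux

lemma FL_subset (𝓛 : Finset (PLine K)) (P : PPoint K) : FL 𝓛 P ⊆ 𝓛 :=
  fun L hL => (mem_FL.1 hL).1

lemma mult_le_card (𝓛 : Finset (PLine K)) (P : PPoint K) : mult 𝓛 P ≤ 𝓛.card := by
  classical
  rw [mult_eq]; exact Finset.card_le_card (Finset.filter_subset _ _)

lemma key {𝓛 : Finset (PLine K)} (hcard : 𝓛.card = 8) :
    ∑ P ∈ SF 𝓛, mult 𝓛 P ≤ 8 + 2 * (SF 𝓛).card := by
  classical
  by_contra hcon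
  push_neg at hcon
  have hmem2 : ∀ P ∈ SF 𝓛, 2 ≤ mult 𝓛 P := fun P hP => mem_SF.1 hP
  have hsum : ∑ P ∈ SF 𝓛, mult 𝓛 P * (mult 𝓛 P - 1) = 56 := by
    rw [sum_global, hcard]
  have hline : ∀ L ∈ 𝓛, ∑ P ∈ (SF 𝓛).filter (fun P => OnLine P L), (mult 𝓛 P - 1) = 7 := by
    intro L hL
    rw [sum_line hL, hcard]
  -- integer versions
  have hsumZ : ∑ P ∈ SF 𝓛, ((mult 𝓛 P : ℤ) * ((mult 𝓛 P : ℤ) - 1)) = 56 := by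
    have e : ∑ P ∈ SF 𝓛, ((mult 𝓛 P : ℤ) * ((mult 𝓛 P : ℤ) - 1))
        = ((∑ P ∈ SF 𝓛, mult 𝓛 P * (mult 𝓛 P - 1) : ℕ) : ℤ) := by
      rw [Nat.cast_sum]
      refine Finset.sum_congr rfl fun P hP => ?_
      have h2 := hmem2 P hP
      rw [Nat.cast_mul, Nat.cast_sub (by omega : 1 ≤ mult 𝓛 P), Nat.cast_one]
    rw [e, hsum]; norm_num
  have hconZ : 8 + 2 * ((SF 𝓛).card : ℤ) + 1 ≤ ∑ P ∈ SF 𝓛, (mult 𝓛 P : ℤ) := by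
    have h : 8 + 2 * (SF 𝓛).card + 1 ≤ ∑ P ∈ SF 𝓛, mult 𝓛 P := hcon
    calc (8 : ℤ) + 2 * ((SF 𝓛).card : ℤ) + 1
        = ((8 + 2 * (SF 𝓛).card + 1 : ℕ) : ℤ) := by push_cast; ring
      _ ≤ ((∑ P ∈ SF 𝓛, mult 𝓛 P : ℕ) : ℤ) := by exact_mod_cast h
      _ = ∑ P ∈ SF 𝓛, (mult 𝓛 P : ℤ) := by rw [Nat.cast_sum]
  have hg : ∑ P ∈ SF 𝓛, ((mult 𝓛 P : ℤ) - 3) * ((mult 𝓛 P : ℤ) - 4) ≤ 2 := by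
    have e : ∀ P ∈ SF 𝓛, ((mult 𝓛 P : ℤ) - 3) * ((mult 𝓛 P : ℤ) - 4)
        = (mult 𝓛 P : ℤ) * ((mult 𝓛 P : ℤ) - 1) - 6 * (mult 𝓛 P : ℤ) + 12 := fun P _ => by ring
    rw [Finset.sum_congr rfl e, Finset.sum_add_distrib, Finset.sum_sub_distrib,
      ← Finset.mul_sum, Finset.sum_const, nsmul_eq_mul, hsumZ]
    linarith [hconZ]
  have hnn : ∀ P ∈ SF 𝓛, (0:ℤ) ≤ ((mult 𝓛 P : ℤ) - 3) * ((mult 𝓛 P : ℤ) - 4) := by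
    intro P _
    rcases le_or_gt ((mult 𝓛 P : ℤ)) 3 with h | h
    · calc (0:ℤ) ≤ (3 - (mult 𝓛 P : ℤ)) * (4 - (mult 𝓛 P : ℤ)) :=
            mul_nonneg (by linarith) (by linarith)
        _ = ((mult 𝓛 P : ℤ) - 3) * ((mult 𝓛 P : ℤ) - 4) := by ring
    · exact mul_nonneg (by linarith) (by linarith)
  set X := (SF 𝓛).filter (fun P => ¬ mult 𝓛 P = 3 ∧ ¬ mult 𝓛 P = 4) with hX
  have hX2 : ∀ P ∈ X, (2:ℤ) ≤ ((mult 𝓛 P : ℤ) - 3) * ((mult 𝓛 P : ℤ) - 4) := by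
    intro P hP
    rw [hX, Finset.mem_filter] at hP
    obtain ⟨hPS, h3, h4⟩ := hP
    have h2 := hmem2 P hPS
    rcases le_or_gt (mult 𝓛 P) 2 with h | h
    · have he : mult 𝓛 P = 2 := le_antisymm h h2
      rw [he]; norm_num
    · have h5 : 5 ≤ mult 𝓛 P := by omega
      have h5' : (5:ℤ) ≤ (mult 𝓛 P : ℤ) := by exact_mod_cast h5
      nlinarith
  have hXcard : X.card ≤ 1 := by
    by_contra hX1
    push_neg at hX1
    have hc2 : (2:ℤ) ≤ (X.card : ℤ) := by exact_mod_cast hX1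
    have h1 : (X.card : ℤ) * 2 ≤ ∑ P ∈ X, ((mult 𝓛 P : ℤ) - 3) * ((mult 𝓛 P : ℤ) - 4) := by
      have := Finset.card_nsmul_le_sum X
        (fun P => ((mult 𝓛 P : ℤ) - 3) * ((mult 𝓛 P : ℤ) - 4)) 2 hX2
      simpa [nsmul_eq_mul] using this
    have h2 : ∑ P ∈ X, ((mult 𝓛 P : ℤ) - 3) * ((mult 𝓛 P : ℤ) - 4)
        ≤ ∑ P ∈ SF 𝓛, ((mult 𝓛 P : ℤ) - 3) * ((mult 𝓛 P : ℤ) - 4) :=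
      Finset.sum_le_sum_of_subset_of_nonneg (Finset.filter_subset _ _)
        (fun P hP _ => hnn P hP)
    linarith
  rcases Finset.eq_empty_or_nonempty X with hXe | hXne
  · have hdvd : (6:ℕ) ∣ ∑ P ∈ SF 𝓛, mult 𝓛 P * (mult 𝓛 P - 1) := by
      refine Finset.dvd_sum fun P hP => ?_
      have h34 : mult 𝓛 P = 3 ∨ mult 𝓛 P = 4 := by
        by_contra hne
        push_neg at hne
        have : P ∈ X := Finset.mem_filter.2 ⟨hP, hne.1, hne.2⟩
        rw [hXe] at this
        exact absurd this (Finset.notMem_empty P)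
      rcases h34 with h | h <;> rw [h] <;> norm_num
    rw [hsum] at hdvd
    norm_num at hdvd
  · obtain ⟨E, hE⟩ := hXne
    have hXsing : X = {E} :=
      Finset.eq_singleton_iff_unique_mem.2 ⟨hE, fun x hx => Finset.card_le_one.1 hXcard x hx E hE⟩
    obtain ⟨hES, hE34⟩ := Finset.mem_filter.1 hE
    have hE2 := hmem2 E hES
    have hOthers : ∀ P ∈ SF 𝓛, P ≠ E → mult 𝓛 P = 3 ∨ mult 𝓛 P = 4 := by
      intro P hP hPE
      by_contra hne
      push_neg at hne
      have hPX : P ∈ X := Finset.mem_filter.2 ⟨hP, hne.1, hne.2⟩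
      rw [hXsing, Finset.mem_singleton] at hPX
      exact hPE hPX
    have hgE : ((mult 𝓛 E : ℤ) - 3) * ((mult 𝓛 E : ℤ) - 4) ≤ 2 := by
      have h := Finset.single_le_sum hnn hES
      linarith
    have hE25 : mult 𝓛 E = 2 ∨ mult 𝓛 E = 5 := by
      rcases le_or_gt (mult 𝓛 E) 2 with h | h
      · left; omega
      · right
        by_contra h5
        have h6 : 6 ≤ mult 𝓛 E := by omega
        have h6' : (6:ℤ) ≤ (mult 𝓛 E : ℤ) := by exact_mod_cast h6
        nlinarith
    -- splitting helper
    have hsplitT : ∀ (T : Finset (PPoint K)), (∀ P ∈ T, mult 𝓛 P = 3 ∨ mult 𝓛 P = 4) →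
        ∑ P ∈ T, (mult 𝓛 P - 1)
          = 2 * (T.filter (fun P => mult 𝓛 P = 3)).card
            + 3 * (T.filter (fun P => mult 𝓛 P = 4)).card := by
      intro T hT
      rw [← Finset.sum_filter_add_sum_filter_not T (fun P => mult 𝓛 P = 3)]
      congr 1
      · rw [Finset.sum_const_nat (m := 2)
          (fun P hP => by rw [(Finset.mem_filter.1 hP).2]), mul_comm]
      · have heq : T.filter (fun P => ¬ mult 𝓛 P = 3) = T.filter (fun P => mult 𝓛 P = 4) := by
          ext P
          simp only [Finset.mem_filter]
          constructor
          · rintro ⟨hP, h3⟩; exact ⟨hP, (hT P hP).resolve_left h3⟩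
          · rintro ⟨hP, h4⟩; exact ⟨hP, by omega⟩
        rw [heq, Finset.sum_const_nat (m := 3)
          (fun P hP => by rw [(Finset.mem_filter.1 hP).2]), mul_comm]
    have hnotE : ∀ L ∈ 𝓛, ¬ OnLine E L →
        2 * (((SF 𝓛).filter (fun P => OnLine P L)).filter (fun P => mult 𝓛 P = 3)).card
          + 3 * (((SF 𝓛).filter (fun P => OnLine P L)).filter (fun P => mult 𝓛 P = 4)).card
          = 7 := by
      intro L hL hEL
      rw [← hsplitT _ (fun P hP => hOthers P (Finset.mem_filter.1 hP).1
        (fun hPE => hEL (hPE ▸ (Finset.mem_filter.1 hP).2)))]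
      exact hline L hL
    have hwithE : ∀ L ∈ 𝓛, OnLine E L →
        (mult 𝓛 E - 1)
          + (2 * ((((SF 𝓛).filter (fun P => OnLine P L)).erase E).filter
                (fun P => mult 𝓛 P = 3)).card
            + 3 * ((((SF 𝓛).filter (fun P => OnLine P L)).erase E).filter
                (fun P => mult 𝓛 P = 4)).card)
          = 7 := by
      intro L hL hEL
      have hEin : E ∈ (SF 𝓛).filter (fun P => OnLine P L) := Finset.mem_filter.2 ⟨hES, hEL⟩
      rw [← hsplitT _ (fun P hP => hOthers P
          (Finset.mem_filter.1 (Finset.mem_of_mem_erase hP)).1 (Finset.mem_erase.1 hP).1),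
        Finset.add_sum_erase _ (fun P => mult 𝓛 P - 1) hEin]
      exact hline L hL
    rcases hE25 with hmE2 | hmE5
    · -- m E = 2 : the double-point case
      have hFLD : (FL 𝓛 E).card = 2 := by rw [← mult_eq]; exact hmE2
      obtain ⟨L0, L1, hL01, hFLD2⟩ := Finset.card_eq_two.1 hFLD
      have hL0m : L0 ∈ FL 𝓛 E := by rw [hFLD2]; exact Finset.mem_insert_self _ _
      have hL1m : L1 ∈ FL 𝓛 E := by rw [hFLD2]; simp
      obtain ⟨hL0𝓛, hL0E⟩ := mem_FL.1 hL0m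
      obtain ⟨hL1𝓛, hL1E⟩ := mem_FL.1 hL1m
      set QS := (SF 𝓛).filter (fun P => mult 𝓛 P = 4) with hQS
      have hQSline : ∀ L : PLine K, QS.filter (fun Q => OnLine Q L)
          = ((SF 𝓛).filter (fun P => OnLine P L)).filter (fun P => mult 𝓛 P = 4) := by
        intro L
        ext P
        simp only [hQS, Finset.mem_filter]
        tauto
      have hnonD1 : ∀ L ∈ 𝓛, ¬ OnLine E L → (QS.filter (fun Q => OnLine Q L)).card = 1 := by
        intro L hL hEL
        have h7 := hnotE L hL hEL
        rw [hQSline]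
        omega
      have hD02 : ∀ L ∈ 𝓛, OnLine E L → (QS.filter (fun Q => OnLine Q L)).card = 0
          ∨ (QS.filter (fun Q => OnLine Q L)).card = 2 := by
        intro L hL hEL
        have h := hwithE L hL hEL
        rw [hmE2] at h
        rw [hQSline]
        have heq : ((SF 𝓛).filter (fun P => OnLine P L)).filter (fun P => mult 𝓛 P = 4)
            = (((SF 𝓛).filter (fun P => OnLine P L)).erase E).filter
              (fun P => mult 𝓛 P = 4) := by
          ext P
          simp only [Finset.mem_filter, Finset.mem_erase]
          constructor
          · rintro ⟨h1, h2⟩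
            refine ⟨⟨fun hPE => ?_, h1⟩, h2⟩
            rw [hPE, hmE2] at h2
            exact absurd h2 (by norm_num)
          · rintro ⟨⟨_, h1⟩, h2⟩
            exact ⟨h1, h2⟩
        rw [heq]
        omega
      have hdouble : 4 * QS.card = ∑ L ∈ 𝓛, (QS.filter (fun Q => OnLine Q L)).card := by
        have h1 : ∀ L : PLine K, (QS.filter (fun Q => OnLine Q L)).card
            = ∑ Q ∈ QS, if OnLine Q L then 1 else 0 := fun L => by
          rw [Finset.card_filter]
        have h2 : ∀ Q ∈ QS, (∑ L ∈ 𝓛, if OnLine Q L then 1 else 0) = 4 := by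
          intro Q hQ
          rw [← Finset.card_filter]
          have hFLQ : 𝓛.filter (fun L => OnLine Q L) = FL 𝓛 Q := rfl
          rw [hFLQ, ← mult_eq]
          exact (Finset.mem_filter.1 hQ).2
        calc 4 * QS.card = ∑ _Q ∈ QS, 4 := by rw [Finset.sum_const, smul_eq_mul, mul_comm]
          _ = ∑ Q ∈ QS, ∑ L ∈ 𝓛, if OnLine Q L then 1 else 0 :=
              (Finset.sum_congr rfl h2).symm
          _ = ∑ L ∈ 𝓛, ∑ Q ∈ QS, if OnLine Q L then 1 else 0 := Finset.sum_comm
          _ = ∑ L ∈ 𝓛, (QS.filter (fun Q => OnLine Q L)).card :=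
              Finset.sum_congr rfl (fun L _ => (h1 L).symm)
      have hsplit𝓛 : ∑ L ∈ 𝓛, (QS.filter (fun Q => OnLine Q L)).card
          = ∑ L ∈ 𝓛 \ FL 𝓛 E, (QS.filter (fun Q => OnLine Q L)).card
            + ∑ L ∈ FL 𝓛 E, (QS.filter (fun Q => OnLine Q L)).card :=
        (Finset.sum_sdiff (Finset.filter_subset _ _)).symm
      have hNDcard : (𝓛 \ FL 𝓛 E).card = 6 := by
        rw [Finset.card_sdiff_of_subset (FL_subset 𝓛 E), hcard, hFLD]
      have hsum_nonD : ∑ L ∈ 𝓛 \ FL 𝓛 E, (QS.filter (fun Q => OnLine Q L)).card = 6 := by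
        have hv : ∀ L ∈ 𝓛 \ FL 𝓛 E, (QS.filter (fun Q => OnLine Q L)).card = 1 := by
          intro L hL
          obtain ⟨hL𝓛, hLnot⟩ := Finset.mem_sdiff.1 hL
          exact hnonD1 L hL𝓛 (fun hc => hLnot (mem_FL.2 ⟨hL𝓛, hc⟩))
        rw [Finset.sum_const_nat (m := 1) hv] at *
        simp [hNDcard]
      have hFLDsum : ∑ L ∈ FL 𝓛 E, (QS.filter (fun Q => OnLine Q L)).card
          = (QS.filter (fun Q => OnLine Q L0)).card
            + (QS.filter (fun Q => OnLine Q L1)).card := by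
        rw [hFLD2, Finset.sum_pair hL01]
      have hLex : ∃ Lq Lo : PLine K, Lq ∈ 𝓛 ∧ Lo ∈ 𝓛
          ∧ ({Lq, Lo} : Finset (PLine K)) = FL 𝓛 E
          ∧ (QS.filter (fun Q => OnLine Q Lq)).card = 2
          ∧ (QS.filter (fun Q => OnLine Q Lo)).card = 0 ∧ QS.card = 2 := by
        rcases hD02 L0 hL0𝓛 hL0E with h0 | h0 <;> rcases hD02 L1 hL1𝓛 hL1E with h1 | h1
        · exfalso; omega
        · exact ⟨L1, L0, hL1𝓛, hL0𝓛, by rw [Finset.pair_comm]; exact hFLD2.symm, h1, h0,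
            by omega⟩
        · exact ⟨L0, L1, hL0𝓛, hL1𝓛, hFLD2.symm, h0, h1, by omega⟩
        · exfalso; omega
      obtain ⟨Lq, Lo, hLq𝓛, hLo𝓛, hpair, hq2, hq0, hQScard⟩ := hLex
      obtain ⟨Q1, Q2, hQ12, hQSpair⟩ := Finset.card_eq_two.1 hQScard
      have hQ1QS : Q1 ∈ QS := by rw [hQSpair]; exact Finset.mem_insert_self _ _
      have hQ2QS : Q2 ∈ QS := by rw [hQSpair]; simp
      obtain ⟨hQ1S, hQ1m⟩ := Finset.mem_filter.1 hQ1QS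
      obtain ⟨hQ2S, hQ2m⟩ := Finset.mem_filter.1 hQ2QS
      have hfilterLq : QS.filter (fun Q => OnLine Q Lq) = QS :=
        Finset.eq_of_subset_of_card_le (Finset.filter_subset _ _) (by omega)
      have hQ1Lq : OnLine Q1 Lq := by
        have h := hQ1QS
        rw [← hfilterLq] at h
        exact (Finset.mem_filter.1 h).2
      have hQ2Lq : OnLine Q2 Lq := by
        have h := hQ2QS
        rw [← hfilterLq] at h
        exact (Finset.mem_filter.1 h).2
      have hQnotLo : ∀ Q ∈ QS, ¬ OnLine Q Lo := by
        intro Q hQ hc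
        have hmem : Q ∈ QS.filter (fun Q => OnLine Q Lo) := Finset.mem_filter.2 ⟨hQ, hc⟩
        rw [Finset.card_eq_zero.1 hq0] at hmem
        exact absurd hmem (Finset.notMem_empty Q)
      have honequad : ∀ L ∈ 𝓛, ¬ OnLine E L → ∀ Q Q' : PPoint K, Q ∈ QS → Q' ∈ QS →
          OnLine Q L → OnLine Q' L → Q = Q' := by
        intro L hL hEL Q Q' hQ hQ' hQL hQ'L
        exact Finset.card_le_one.1 (le_of_eq (hnonD1 L hL hEL)) Q
          (Finset.mem_filter.2 ⟨hQ, hQL⟩) Q' (Finset.mem_filter.2 ⟨hQ', hQ'L⟩)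
      have hAprop : ∀ a ∈ FL 𝓛 Q1 \ FL 𝓛 E, a ∈ 𝓛 ∧ OnLine Q1 a ∧ ¬ OnLine E a := by
        intro a ha
        obtain ⟨ha1, ha2⟩ := Finset.mem_sdiff.1 ha
        obtain ⟨h𝓛, hQ⟩ := mem_FL.1 ha1
        exact ⟨h𝓛, hQ, fun hc => ha2 (mem_FL.2 ⟨h𝓛, hc⟩)⟩
      have hBprop : ∀ b ∈ FL 𝓛 Q2 \ FL 𝓛 E, b ∈ 𝓛 ∧ OnLine Q2 b ∧ ¬ OnLine E b := by
        intro b hb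
        obtain ⟨hb1, hb2⟩ := Finset.mem_sdiff.1 hb
        obtain ⟨h𝓛, hQ⟩ := mem_FL.1 hb1
        exact ⟨h𝓛, hQ, fun hc => hb2 (mem_FL.2 ⟨h𝓛, hc⟩)⟩
      have hinterA : FL 𝓛 Q1 ∩ FL 𝓛 E = {Lq} := by
        ext L
        simp only [Finset.mem_inter, Finset.mem_singleton]
        constructor
        · rintro ⟨hLQ1, hLD⟩
          rw [← hpair] at hLD
          rcases Finset.mem_insert.1 hLD with rfl | hLD
          · rfl
          · rw [Finset.mem_singleton] at hLD
            subst hLD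
            exact absurd ((mem_FL.1 hLQ1).2) (hQnotLo Q1 hQ1QS)
        · rintro rfl
          refine ⟨mem_FL.2 ⟨hLq𝓛, hQ1Lq⟩, ?_⟩
          rw [← hpair]
          exact Finset.mem_insert_self _ _
      have hinterB : FL 𝓛 Q2 ∩ FL 𝓛 E = {Lq} := by
        ext L
        simp only [Finset.mem_inter, Finset.mem_singleton]
        constructor
        · rintro ⟨hLQ2, hLD⟩
          rw [← hpair] at hLD
          rcases Finset.mem_insert.1 hLD with rfl | hLD
          · rfl
          · rw [Finset.mem_singleton] at hLD
            subst hLD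
            exact absurd ((mem_FL.1 hLQ2).2) (hQnotLo Q2 hQ2QS)
        · rintro rfl
          refine ⟨mem_FL.2 ⟨hLq𝓛, hQ2Lq⟩, ?_⟩
          rw [← hpair]
          exact Finset.mem_insert_self _ _
      have hAcard : (FL 𝓛 Q1 \ FL 𝓛 E).card = 3 := by
        have h := Finset.card_sdiff_add_card_inter (FL 𝓛 Q1) (FL 𝓛 E)
        have h4 : (FL 𝓛 Q1).card = 4 := by rw [← mult_eq]; exact hQ1m
        rw [hinterA, Finset.card_singleton, h4] at h
        omega
      have hBcard : (FL 𝓛 Q2 \ FL 𝓛 E).card = 3 := by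
        have h := Finset.card_sdiff_add_card_inter (FL 𝓛 Q2) (FL 𝓛 E)
        have h4 : (FL 𝓛 Q2).card = 4 := by rw [← mult_eq]; exact hQ2m
        rw [hinterB, Finset.card_singleton, h4] at h
        omega
      set TS := (SF 𝓛).filter (fun P => mult 𝓛 P = 3) with hTS
      have hTScard : TS.card = 5 := by
        have hs1 := (Finset.sum_filter_add_sum_filter_not (SF 𝓛) (fun P => mult 𝓛 P = 3)
          (fun P => mult 𝓛 P * (mult 𝓛 P - 1))).symm
        have hs2 := (Finset.sum_filter_add_sum_filter_not
          ((SF 𝓛).filter (fun P => ¬ mult 𝓛 P = 3))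
          (fun P => mult 𝓛 P = 4) (fun P => mult 𝓛 P * (mult 𝓛 P - 1))).symm
        have hQS' : ((SF 𝓛).filter (fun P => ¬ mult 𝓛 P = 3)).filter
            (fun P => mult 𝓛 P = 4) = QS := by
          rw [hQS, Finset.filter_filter]
          ext P
          simp only [Finset.mem_filter]
          constructor
          · rintro ⟨hS, _, h4⟩
            exact ⟨hS, h4⟩
          · rintro ⟨hS, h4⟩
            exact ⟨hS, by omega, h4⟩
        have hX' : ((SF 𝓛).filter (fun P => ¬ mult 𝓛 P = 3)).filter
            (fun P => ¬ mult 𝓛 P = 4) = {E} := by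
          rw [Finset.filter_filter, ← hX]
          exact hXsing
        have hTSsum : ∑ P ∈ TS, mult 𝓛 P * (mult 𝓛 P - 1) = 6 * TS.card := by
          rw [Finset.sum_const_nat (m := 6) (fun P hP => by
            rw [(Finset.mem_filter.1 hP).2]), mul_comm]
        have hQSsum : ∑ P ∈ QS, mult 𝓛 P * (mult 𝓛 P - 1) = 24 := by
          rw [Finset.sum_const_nat (m := 12) (fun P hP => by
            rw [(Finset.mem_filter.1 hP).2]), hQScard]
        have hEsum : ∑ P ∈ ({E} : Finset (PPoint K)), mult 𝓛 P * (mult 𝓛 P - 1) = 2 := by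
          rw [Finset.sum_singleton, hmE2]
        rw [hQS', hX'] at hs2
        rw [hs2, ← hTS] at hs1
        rw [hsum, hTSsum, hQSsum, hEsum] at hs1
        omega
      have hmap : ∀ p ∈ (FL 𝓛 Q1 \ FL 𝓛 E) ×ˢ (FL 𝓛 Q2 \ FL 𝓛 E), pt p.1 p.2 ∈ TS := by
        rintro ⟨a, b⟩ hp
        rw [Finset.mem_product] at hp
        obtain ⟨ha𝓛, haQ1, haE⟩ := hAprop a hp.1
        obtain ⟨hb𝓛, hbQ2, hbE⟩ := hBprop b hp.2
        have hQ1b : ¬ OnLine Q1 b :=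
          fun hc => hQ12 (honequad b hb𝓛 hbE Q1 Q2 hQ1QS hQ2QS hc hbQ2)
        have hQ2a : ¬ OnLine Q2 a :=
          fun hc => hQ12 (honequad a ha𝓛 haE Q1 Q2 hQ1QS hQ2QS haQ1 hc)
        have hab : a ≠ b := fun h => hQ1b (h ▸ haQ1)
        have hPS : pt a b ∈ SF 𝓛 := mem_SF.2 (two_le_mult_pt ha𝓛 hb𝓛 hab)
        have hPa := pt_left a b
        have hPb := pt_right a b
        have hPE : pt a b ≠ E := fun h => haE (h ▸ hPa)
        rcases hOthers _ hPS hPE with h3 | h4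
        · exact Finset.mem_filter.2 ⟨hPS, h3⟩
        · exfalso
          have hPQS : pt a b ∈ QS := Finset.mem_filter.2 ⟨hPS, h4⟩
          rw [hQSpair] at hPQS
          rcases Finset.mem_insert.1 hPQS with h | h
          · exact hQ1b (h ▸ hPb)
          · rw [Finset.mem_singleton] at h
            exact hQ2a (h ▸ hPa)
      have hinj : Set.InjOn (fun p : PLine K × PLine K => pt p.1 p.2)
          (((FL 𝓛 Q1 \ FL 𝓛 E) ×ˢ (FL 𝓛 Q2 \ FL 𝓛 E) : Finset (PLine K × PLine K)) :
            Set (PLine K × PLine K)) := by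
        rintro ⟨a, b⟩ hp ⟨a', b'⟩ hp' heq
        have hpF : (a, b) ∈ (FL 𝓛 Q1 \ FL 𝓛 E) ×ˢ (FL 𝓛 Q2 \ FL 𝓛 E) :=
          Finset.mem_coe.1 hp
        have hpF' : (a', b') ∈ (FL 𝓛 Q1 \ FL 𝓛 E) ×ˢ (FL 𝓛 Q2 \ FL 𝓛 E) :=
          Finset.mem_coe.1 hp'
        have hab2 := Finset.mem_product.1 hpF
        have hab2' := Finset.mem_product.1 hpF'
        obtain ⟨ha𝓛, haQ1, haE⟩ := hAprop a hab2.1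
        obtain ⟨hb𝓛, hbQ2, hbE⟩ := hBprop b hab2.2
        obtain ⟨ha'𝓛, ha'Q1, ha'E⟩ := hAprop a' hab2'.1
        obtain ⟨hb'𝓛, hb'Q2, hb'E⟩ := hBprop b' hab2'.2
        simp only at heq
        have hP3 : mult 𝓛 (pt a b) = 3 := (Finset.mem_filter.1 (hmap (a, b) hpF)).2
        have haa : a = a' := by
          by_contra hne
          have h2 : OnLine (pt a b) a' := by rw [heq]; exact pt_left a' b'
          have hPQ1 : pt a b = Q1 := unique_common hne (pt_left a b) h2 haQ1 ha'Q1
          rw [hPQ1, hQ1m] at hP3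
          exact absurd hP3 (by norm_num)
        have hbb : b = b' := by
          by_contra hne
          have h2 : OnLine (pt a b) b' := by rw [heq]; exact pt_right a' b'
          have hPQ2 : pt a b = Q2 := unique_common hne (pt_right a b) h2 hbQ2 hb'Q2
          rw [hPQ2, hQ2m] at hP3
          exact absurd hP3 (by norm_num)
        simp [haa, hbb]
      have hle := Finset.card_le_card_of_injOn _ hmap hinj
      rw [Finset.card_product, hAcard, hBcard, hTScard] at hle
      omega
    · -- m E = 5 : the quintuple-point case
      have hFLE : (FL 𝓛 E).card = 5 := by rw [← mult_eq]; exact hmE5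
      have hnotriple : ∀ L ∈ 𝓛, OnLine E L → ∀ P ∈ SF 𝓛, OnLine P L → mult 𝓛 P ≠ 3 := by
        intro L hL hEL P hPS hPL h3
        have h := hwithE L hL hEL
        rw [hmE5] at h
        have hPE : P ≠ E := fun hc => by
          rw [hc, hmE5] at h3
          exact absurd h3 (by norm_num)
        have hPmem : P ∈ (((SF 𝓛).filter (fun P => OnLine P L)).erase E).filter
            (fun P => mult 𝓛 P = 3) :=
          Finset.mem_filter.2 ⟨Finset.mem_erase.2 ⟨hPE, Finset.mem_filter.2 ⟨hPS, hPL⟩⟩, h3⟩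
        have hpos := Finset.card_pos.2 ⟨P, hPmem⟩
        omega
      set NE := 𝓛 \ FL 𝓛 E with hNE
      have hNEcard : NE.card = 3 := by
        rw [hNE, Finset.card_sdiff_of_subset (FL_subset 𝓛 E), hcard, hFLE]
      have htriple_all : ∀ T ∈ SF 𝓛, mult 𝓛 T = 3 → ∀ L ∈ NE, OnLine T L := by
        intro T hTS hT3 L hLNE
        have hsub : FL 𝓛 T ⊆ NE := by
          intro M hM
          obtain ⟨hM𝓛, hTM⟩ := mem_FL.1 hM
          rw [hNE, Finset.mem_sdiff]
          exact ⟨hM𝓛, fun hMFL => hnotriple M hM𝓛 (mem_FL.1 hMFL).2 T hTS hTM hT3⟩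
        have heq : FL 𝓛 T = NE := Finset.eq_of_subset_of_card_le hsub
          (by rw [hNEcard, ← mult_eq, hT3])
        rw [← heq] at hLNE
        exact (mem_FL.1 hLNE).2
      obtain ⟨ℓ, hℓ⟩ := Finset.card_pos.1 (by omega : 0 < NE.card)
      have hℓ' := hℓ
      rw [hNE] at hℓ'
      obtain ⟨hℓ𝓛, hℓE⟩ := Finset.mem_sdiff.1 hℓ'
      have hℓnotE : ¬ OnLine E ℓ := fun hc => hℓE (mem_FL.2 ⟨hℓ𝓛, hc⟩)
      have h7 := hnotE ℓ hℓ𝓛 hℓnotE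
      have h1lt : 1 < (((SF 𝓛).filter (fun P => OnLine P ℓ)).filter
          (fun P => mult 𝓛 P = 3)).card := by omega
      obtain ⟨T, hT, T', hT', hTT'⟩ := Finset.one_lt_card.1 h1lt
      obtain ⟨hTSL, hT3⟩ := Finset.mem_filter.1 hT
      obtain ⟨hTS, hTℓ⟩ := Finset.mem_filter.1 hTSL
      obtain ⟨hT'SL, hT'3⟩ := Finset.mem_filter.1 hT'
      obtain ⟨hT'S, hT'ℓ⟩ := Finset.mem_filter.1 hT'SL
      obtain ⟨ℓ', hℓ'NE, hℓ'ℓ⟩ := Finset.exists_mem_ne (s := NE) (by omega) ℓ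
      exact hTT' (unique_common (Ne.symm hℓ'ℓ) hTℓ (htriple_all T hTS hT3 ℓ' hℓ'NE)
        hT'ℓ (htriple_all T' hT'S hT'3 ℓ' hℓ'NE))



lemma SF_nonempty {𝓛 : Finset (PLine K)} (h2 : 2 ≤ 𝓛.card) : (SF 𝓛).Nonempty := by
  classical
  have h1 : 1 < 𝓛.card := by omega
  obtain ⟨L, hL, L', hL', hne⟩ := Finset.one_lt_card.mp h1
  exact ⟨pt L L', mem_SF.2 (two_le_mult_pt hL hL' hne)⟩

lemma part1 (𝓛 : Finset (PLine K)) (hcard : 𝓛.card = 8) : -2 ≤ HL 𝓛 := by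
  classical
  have hpos : 0 < (SF 𝓛).card := Finset.card_pos.2 (SF_nonempty (by omega))
  have hkey := key hcard
  have hsum : ∑ P ∈ SF 𝓛, mult 𝓛 P * (mult 𝓛 P - 1) = 56 := by rw [sum_global, hcard]
  have hpt2 : ∀ n : ℕ, 1 ≤ n → n ^ 2 = n * (n - 1) + n := by
    intro n hn
    cases n with
    | zero => omega
    | succ k => rw [Nat.succ_sub_one]; ring
  have hsq : ∑ P ∈ SF 𝓛, mult 𝓛 P ^ 2 = 56 + ∑ P ∈ SF 𝓛, mult 𝓛 P := by
    rw [← hsum, ← Finset.sum_add_distrib]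
    exact Finset.sum_congr rfl fun P hP => hpt2 _ (by have := mem_SF.1 hP; omega)
  have hQ : (∑ P ∈ SF 𝓛, (mult 𝓛 P : ℚ) ^ 2)
      = (56 : ℚ) + ((∑ P ∈ SF 𝓛, mult 𝓛 P : ℕ) : ℚ) := by
    have hc : ∑ P ∈ SF 𝓛, (mult 𝓛 P : ℚ) ^ 2 = ((∑ P ∈ SF 𝓛, mult 𝓛 P ^ 2 : ℕ) : ℚ) := by
      rw [Nat.cast_sum]
      exact Finset.sum_congr rfl fun P _ => by push_cast; ring
    rw [hc, hsq]
    push_cast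
    ring
  have hkeyQ : ((∑ P ∈ SF 𝓛, mult 𝓛 P : ℕ) : ℚ) ≤ 8 + 2 * ((SF 𝓛).card : ℚ) := by
    exact_mod_cast hkey
  rw [HL, hcard, ← coe_SF, finsum_mem_coe_finset, Set.ncard_coe_finset]
  rw [le_div_iff₀ (by exact_mod_cast hpos : (0:ℚ) < ((SF 𝓛).card : ℚ))]
  rw [hQ]
  push_cast at hkeyQ ⊢
  linarith

end KeyProof

namespace MK
noncomputable def ω : ℂ := ⟨-(1/2), Real.sqrt 3 / 2⟩
lemma omega_re : ω.re = -(1/2) := rfl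
lemma omega_im : ω.im = Real.sqrt 3 / 2 := rfl
lemma homega : ω ^ 2 + ω + 1 = 0 := by
  have hs : Real.sqrt 3 * Real.sqrt 3 = 3 := Real.mul_self_sqrt (by norm_num)
  apply Complex.ext
  · simp [pow_two, Complex.mul_re, Complex.add_re, omega_re, omega_im]
    nlinarith
  · simp [pow_two, Complex.mul_im, Complex.add_im, omega_re, omega_im]
    ring
lemma hnzq (a b : ℚ) (h : ¬(a = 0 ∧ b = 0)) : (a : ℂ) + (b : ℂ) * ω ≠ 0 := by
  intro h0
  have hs3 : 0 < Real.sqrt 3 := Real.sqrt_pos.2 (by norm_num)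
  have him := congrArg Complex.im h0
  have hre := congrArg Complex.re h0
  simp only [Complex.add_im, Complex.add_re, Complex.mul_im, Complex.mul_re,
    Complex.ratCast_im, Complex.ratCast_re, Complex.zero_im, Complex.zero_re,
    omega_im, omega_re, zero_mul, mul_zero, zero_add, add_zero, zero_sub, sub_zero] at him hre
  have hb : (b : ℝ) = 0 := by
    rcases mul_eq_zero.1 him with h' | h'
    · exact h'
    · nlinarith
  have ha : (a : ℝ) = 0 := by
    rw [hb] at hre
    simpa using hre
  exact h ⟨by exact_mod_cast ha, by exact_mod_cast hb⟩
noncomputable def lf (a b c : ℂ) : Module.Dual ℂ (Fin 3 → ℂ) :=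
  a • LinearMap.proj 0 + b • LinearMap.proj 1 + c • LinearMap.proj 2
def vec (x y z : ℂ) : Fin 3 → ℂ := ![x, y, z]
lemma lf_vec (a b c x y z : ℂ) : lf a b c (vec x y z) = a * x + b * y + c * z := by
  simp [lf, vec]
open scoped Classical

noncomputable def l0 : PLine ℂ := Projectivization.mk ℂ (lf ((1 : ℂ) + (0 : ℂ) * ω) ((0 : ℂ) + (0 : ℂ) * ω) ((0 : ℂ) + (0 : ℂ) * ω)) (by
  intro h
  have h1 := LinearMap.congr_fun h (vec 1 0 0)
  rw [lf_vec] at h1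
  simp only [LinearMap.zero_apply] at h1
  exact hnzq (1) (0) (by norm_num) (by push_cast; linear_combination h1))

noncomputable def l1 : PLine ℂ := Projectivization.mk ℂ (lf ((0 : ℂ) + (0 : ℂ) * ω) ((1 : ℂ) + (0 : ℂ) * ω) ((0 : ℂ) + (0 : ℂ) * ω)) (by
  intro h
  have h1 := LinearMap.congr_fun h (vec 0 1 0)
  rw [lf_vec] at h1
  simp only [LinearMap.zero_apply] at h1
  exact hnzq (1) (0) (by norm_num) (by push_cast; linear_combination h1))

noncomputable def l2 : PLine ℂ := Projectivization.mk ℂ (lf ((0 : ℂ) + (0 : ℂ) * ω) ((0 : ℂ) + (0 : ℂ) * ω) ((1 : ℂ) + (0 : ℂ) * ω)) (by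
  intro h
  have h1 := LinearMap.congr_fun h (vec 0 0 1)
  rw [lf_vec] at h1
  simp only [LinearMap.zero_apply] at h1
  exact hnzq (1) (0) (by norm_num) (by push_cast; linear_combination h1))

noncomputable def l3 : PLine ℂ := Projectivization.mk ℂ (lf ((-1 : ℂ) + (0 : ℂ) * ω) ((-1 : ℂ) + (0 : ℂ) * ω) ((0 : ℂ) + (0 : ℂ) * ω)) (by
  intro h
  have h1 := LinearMap.congr_fun h (vec 1 0 0)
  rw [lf_vec] at h1
  simp only [LinearMap.zero_apply] at h1
  exact hnzq (-1) (0) (by norm_num) (by push_cast; linear_combination h1))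

noncomputable def l4 : PLine ℂ := Projectivization.mk ℂ (lf ((0 : ℂ) + (0 : ℂ) * ω) ((0 : ℂ) + (-1 : ℂ) * ω) ((1 : ℂ) + (0 : ℂ) * ω)) (by
  intro h
  have h1 := LinearMap.congr_fun h (vec 0 1 0)
  rw [lf_vec] at h1
  simp only [LinearMap.zero_apply] at h1
  exact hnzq (0) (-1) (by norm_num) (by push_cast; linear_combination h1))

noncomputable def l5 : PLine ℂ := Projectivization.mk ℂ (lf ((1 : ℂ) + (0 : ℂ) * ω) ((1 : ℂ) + (0 : ℂ) * ω) ((1 : ℂ) + (0 : ℂ) * ω)) (by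
  intro h
  have h1 := LinearMap.congr_fun h (vec 1 0 0)
  rw [lf_vec] at h1
  simp only [LinearMap.zero_apply] at h1
  exact hnzq (1) (0) (by norm_num) (by push_cast; linear_combination h1))

noncomputable def l6 : PLine ℂ := Projectivization.mk ℂ (lf ((1 : ℂ) + (1 : ℂ) * ω) ((1 : ℂ) + (0 : ℂ) * ω) ((1 : ℂ) + (0 : ℂ) * ω)) (by
  intro h
  have h1 := LinearMap.congr_fun h (vec 1 0 0)
  rw [lf_vec] at h1
  simp only [LinearMap.zero_apply] at h1
  exact hnzq (1) (1) (by norm_num) (by push_cast; linear_combination h1))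

noncomputable def l7 : PLine ℂ := Projectivization.mk ℂ (lf ((1 : ℂ) + (1 : ℂ) * ω) ((0 : ℂ) + (0 : ℂ) * ω) ((1 : ℂ) + (0 : ℂ) * ω)) (by
  intro h
  have h1 := LinearMap.congr_fun h (vec 1 0 0)
  rw [lf_vec] at h1
  simp only [LinearMap.zero_apply] at h1
  exact hnzq (1) (1) (by norm_num) (by push_cast; linear_combination h1))

noncomputable def pt0 : PPoint ℂ := Projectivization.mk ℂ (vec ((0 : ℂ) + (0 : ℂ) * ω) ((0 : ℂ) + (0 : ℂ) * ω) ((1 : ℂ) + (0 : ℂ) * ω)) (by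
  intro h
  have h1 := congrFun h 2
  simp only [vec, Matrix.cons_val_zero, Matrix.cons_val_one, Matrix.head_cons,
    Matrix.cons_val_two, Matrix.tail_cons, Pi.zero_apply] at h1
  exact hnzq (1) (0) (by norm_num) (by push_cast; linear_combination h1))

noncomputable def pt1 : PPoint ℂ := Projectivization.mk ℂ (vec ((1 : ℂ) + (0 : ℂ) * ω) ((0 : ℂ) + (0 : ℂ) * ω) ((0 : ℂ) + (0 : ℂ) * ω)) (by
  intro h
  have h1 := congrFun h 0
  simp only [vec, Matrix.cons_val_zero, Matrix.cons_val_one, Matrix.head_cons,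
    Matrix.cons_val_two, Matrix.tail_cons, Pi.zero_apply] at h1
  exact hnzq (1) (0) (by norm_num) (by push_cast; linear_combination h1))

noncomputable def pt2 : PPoint ℂ := Projectivization.mk ℂ (vec ((1 : ℂ) + (0 : ℂ) * ω) ((-1 : ℂ) + (0 : ℂ) * ω) ((0 : ℂ) + (0 : ℂ) * ω)) (by
  intro h
  have h1 := congrFun h 0
  simp only [vec, Matrix.cons_val_zero, Matrix.cons_val_one, Matrix.head_cons,
    Matrix.cons_val_two, Matrix.tail_cons, Pi.zero_apply] at h1
  exact hnzq (1) (0) (by norm_num) (by push_cast; linear_combination h1))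

noncomputable def pt3 : PPoint ℂ := Projectivization.mk ℂ (vec ((-1 : ℂ) + (0 : ℂ) * ω) ((1 : ℂ) + (0 : ℂ) * ω) ((0 : ℂ) + (1 : ℂ) * ω)) (by
  intro h
  have h1 := congrFun h 0
  simp only [vec, Matrix.cons_val_zero, Matrix.cons_val_one, Matrix.head_cons,
    Matrix.cons_val_two, Matrix.tail_cons, Pi.zero_apply] at h1
  exact hnzq (-1) (0) (by norm_num) (by push_cast; linear_combination h1))

noncomputable def pt4 : PPoint ℂ := Projectivization.mk ℂ (vec ((-1 : ℂ) + (-1 : ℂ) * ω) ((1 : ℂ) + (0 : ℂ) * ω) ((0 : ℂ) + (1 : ℂ) * ω)) (by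
  intro h
  have h1 := congrFun h 0
  simp only [vec, Matrix.cons_val_zero, Matrix.cons_val_one, Matrix.head_cons,
    Matrix.cons_val_two, Matrix.tail_cons, Pi.zero_apply] at h1
  exact hnzq (-1) (-1) (by norm_num) (by push_cast; linear_combination h1))

noncomputable def pt5 : PPoint ℂ := Projectivization.mk ℂ (vec ((0 : ℂ) + (0 : ℂ) * ω) ((-1 : ℂ) + (0 : ℂ) * ω) ((1 : ℂ) + (0 : ℂ) * ω)) (by
  intro h
  have h1 := congrFun h 1
  simp only [vec, Matrix.cons_val_zero, Matrix.cons_val_one, Matrix.head_cons,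
    Matrix.cons_val_two, Matrix.tail_cons, Pi.zero_apply] at h1
  exact hnzq (-1) (0) (by norm_num) (by push_cast; linear_combination h1))

noncomputable def pt6 : PPoint ℂ := Projectivization.mk ℂ (vec ((1 : ℂ) + (0 : ℂ) * ω) ((0 : ℂ) + (0 : ℂ) * ω) ((-1 : ℂ) + (-1 : ℂ) * ω)) (by
  intro h
  have h1 := congrFun h 0
  simp only [vec, Matrix.cons_val_zero, Matrix.cons_val_one, Matrix.head_cons,
    Matrix.cons_val_two, Matrix.tail_cons, Pi.zero_apply] at h1
  exact hnzq (1) (0) (by norm_num) (by push_cast; linear_combination h1))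

noncomputable def pt7 : PPoint ℂ := Projectivization.mk ℂ (vec ((0 : ℂ) + (0 : ℂ) * ω) ((-1 : ℂ) + (0 : ℂ) * ω) ((0 : ℂ) + (0 : ℂ) * ω)) (by
  intro h
  have h1 := congrFun h 1
  simp only [vec, Matrix.cons_val_zero, Matrix.cons_val_one, Matrix.head_cons,
    Matrix.cons_val_two, Matrix.tail_cons, Pi.zero_apply] at h1
  exact hnzq (-1) (0) (by norm_num) (by push_cast; linear_combination h1))

noncomputable def pt8 : PPoint ℂ := Projectivization.mk ℂ (vec ((0 : ℂ) + (0 : ℂ) * ω) ((-1 : ℂ) + (0 : ℂ) * ω) ((0 : ℂ) + (-1 : ℂ) * ω)) (by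
  intro h
  have h1 := congrFun h 1
  simp only [vec, Matrix.cons_val_zero, Matrix.cons_val_one, Matrix.head_cons,
    Matrix.cons_val_two, Matrix.tail_cons, Pi.zero_apply] at h1
  exact hnzq (-1) (0) (by norm_num) (by push_cast; linear_combination h1))

noncomputable def pt9 : PPoint ℂ := Projectivization.mk ℂ (vec ((1 : ℂ) + (0 : ℂ) * ω) ((0 : ℂ) + (0 : ℂ) * ω) ((-1 : ℂ) + (0 : ℂ) * ω)) (by
  intro h
  have h1 := congrFun h 0
  simp only [vec, Matrix.cons_val_zero, Matrix.cons_val_one, Matrix.head_cons,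
    Matrix.cons_val_two, Matrix.tail_cons, Pi.zero_apply] at h1
  exact hnzq (1) (0) (by norm_num) (by push_cast; linear_combination h1))

noncomputable def pt10 : PPoint ℂ := Projectivization.mk ℂ (vec ((-1 : ℂ) + (0 : ℂ) * ω) ((1 : ℂ) + (1 : ℂ) * ω) ((0 : ℂ) + (0 : ℂ) * ω)) (by
  intro h
  have h1 := congrFun h 0
  simp only [vec, Matrix.cons_val_zero, Matrix.cons_val_one, Matrix.head_cons,
    Matrix.cons_val_two, Matrix.tail_cons, Pi.zero_apply] at h1
  exact hnzq (-1) (0) (by norm_num) (by push_cast; linear_combination h1))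

noncomputable def pt11 : PPoint ℂ := Projectivization.mk ℂ (vec ((-1 : ℂ) + (0 : ℂ) * ω) ((1 : ℂ) + (0 : ℂ) * ω) ((1 : ℂ) + (1 : ℂ) * ω)) (by
  intro h
  have h1 := congrFun h 0
  simp only [vec, Matrix.cons_val_zero, Matrix.cons_val_one, Matrix.head_cons,
    Matrix.cons_val_two, Matrix.tail_cons, Pi.zero_apply] at h1
  exact hnzq (-1) (0) (by norm_num) (by push_cast; linear_combination h1))

lemma inc_0_0 : OnLine pt0 l0 := by
  unfold pt0 l0
  rw [HLaux.onLine_mk_mk, lf_vec]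
  linear_combination ((0) : ℂ) * homega

lemma inc_0_1 : OnLine pt0 l1 := by
  unfold pt0 l1
  rw [HLaux.onLine_mk_mk, lf_vec]
  linear_combination ((0) : ℂ) * homega

lemma ninc_0_2 : ¬ OnLine pt0 l2 := by
  intro h
  unfold pt0 l2 at h
  rw [HLaux.onLine_mk_mk, lf_vec] at h
  exact hnzq (1) (0) (by norm_num) (by push_cast; linear_combination h - ((0) : ℂ) * homega)

lemma inc_0_3 : OnLine pt0 l3 := by
  unfold pt0 l3
  rw [HLaux.onLine_mk_mk, lf_vec]
  linear_combination ((0) : ℂ) * homega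

lemma ninc_0_4 : ¬ OnLine pt0 l4 := by
  intro h
  unfold pt0 l4 at h
  rw [HLaux.onLine_mk_mk, lf_vec] at h
  exact hnzq (1) (0) (by norm_num) (by push_cast; linear_combination h - ((0) : ℂ) * homega)

lemma ninc_0_5 : ¬ OnLine pt0 l5 := by
  intro h
  unfold pt0 l5 at h
  rw [HLaux.onLine_mk_mk, lf_vec] at h
  exact hnzq (1) (0) (by norm_num) (by push_cast; linear_combination h - ((0) : ℂ) * homega)

lemma ninc_0_6 : ¬ OnLine pt0 l6 := by
  intro h
  unfold pt0 l6 at h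
  rw [HLaux.onLine_mk_mk, lf_vec] at h
  exact hnzq (1) (0) (by norm_num) (by push_cast; linear_combination h - ((0) : ℂ) * homega)

lemma ninc_0_7 : ¬ OnLine pt0 l7 := by
  intro h
  unfold pt0 l7 at h
  rw [HLaux.onLine_mk_mk, lf_vec] at h
  exact hnzq (1) (0) (by norm_num) (by push_cast; linear_combination h - ((0) : ℂ) * homega)

lemma ninc_1_0 : ¬ OnLine pt1 l0 := by
  intro h
  unfold pt1 l0 at h
  rw [HLaux.onLine_mk_mk, lf_vec] at h
  exact hnzq (1) (0) (by norm_num) (by push_cast; linear_combination h - ((0) : ℂ) * homega)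

lemma inc_1_1 : OnLine pt1 l1 := by
  unfold pt1 l1
  rw [HLaux.onLine_mk_mk, lf_vec]
  linear_combination ((0) : ℂ) * homega

lemma inc_1_2 : OnLine pt1 l2 := by
  unfold pt1 l2
  rw [HLaux.onLine_mk_mk, lf_vec]
  linear_combination ((0) : ℂ) * homega

lemma ninc_1_3 : ¬ OnLine pt1 l3 := by
  intro h
  unfold pt1 l3 at h
  rw [HLaux.onLine_mk_mk, lf_vec] at h
  exact hnzq (-1) (0) (by norm_num) (by push_cast; linear_combination h - ((0) : ℂ) * homega)

lemma inc_1_4 : OnLine pt1 l4 := by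
  unfold pt1 l4
  rw [HLaux.onLine_mk_mk, lf_vec]
  linear_combination ((0) : ℂ) * homega

lemma ninc_1_5 : ¬ OnLine pt1 l5 := by
  intro h
  unfold pt1 l5 at h
  rw [HLaux.onLine_mk_mk, lf_vec] at h
  exact hnzq (1) (0) (by norm_num) (by push_cast; linear_combination h - ((0) : ℂ) * homega)

lemma ninc_1_6 : ¬ OnLine pt1 l6 := by
  intro h
  unfold pt1 l6 at h
  rw [HLaux.onLine_mk_mk, lf_vec] at h
  exact hnzq (1) (1) (by norm_num) (by push_cast; linear_combination h - ((0) : ℂ) * homega)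

lemma ninc_1_7 : ¬ OnLine pt1 l7 := by
  intro h
  unfold pt1 l7 at h
  rw [HLaux.onLine_mk_mk, lf_vec] at h
  exact hnzq (1) (1) (by norm_num) (by push_cast; linear_combination h - ((0) : ℂ) * homega)

lemma ninc_2_0 : ¬ OnLine pt2 l0 := by
  intro h
  unfold pt2 l0 at h
  rw [HLaux.onLine_mk_mk, lf_vec] at h
  exact hnzq (1) (0) (by norm_num) (by push_cast; linear_combination h - ((0) : ℂ) * homega)

lemma ninc_2_1 : ¬ OnLine pt2 l1 := by
  intro h
  unfold pt2 l1 at h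
  rw [HLaux.onLine_mk_mk, lf_vec] at h
  exact hnzq (-1) (0) (by norm_num) (by push_cast; linear_combination h - ((0) : ℂ) * homega)

lemma inc_2_2 : OnLine pt2 l2 := by
  unfold pt2 l2
  rw [HLaux.onLine_mk_mk, lf_vec]
  linear_combination ((0) : ℂ) * homega

lemma inc_2_3 : OnLine pt2 l3 := by
  unfold pt2 l3
  rw [HLaux.onLine_mk_mk, lf_vec]
  linear_combination ((0) : ℂ) * homega

lemma ninc_2_4 : ¬ OnLine pt2 l4 := by
  intro h
  unfold pt2 l4 at h
  rw [HLaux.onLine_mk_mk, lf_vec] at h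
  exact hnzq (0) (1) (by norm_num) (by push_cast; linear_combination h - ((0) : ℂ) * homega)

lemma inc_2_5 : OnLine pt2 l5 := by
  unfold pt2 l5
  rw [HLaux.onLine_mk_mk, lf_vec]
  linear_combination ((0) : ℂ) * homega

lemma ninc_2_6 : ¬ OnLine pt2 l6 := by
  intro h
  unfold pt2 l6 at h
  rw [HLaux.onLine_mk_mk, lf_vec] at h
  exact hnzq (0) (1) (by norm_num) (by push_cast; linear_combination h - ((0) : ℂ) * homega)

lemma ninc_2_7 : ¬ OnLine pt2 l7 := by
  intro h
  unfold pt2 l7 at h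
  rw [HLaux.onLine_mk_mk, lf_vec] at h
  exact hnzq (1) (1) (by norm_num) (by push_cast; linear_combination h - ((0) : ℂ) * homega)

lemma ninc_3_0 : ¬ OnLine pt3 l0 := by
  intro h
  unfold pt3 l0 at h
  rw [HLaux.onLine_mk_mk, lf_vec] at h
  exact hnzq (-1) (0) (by norm_num) (by push_cast; linear_combination h - ((0) : ℂ) * homega)

lemma ninc_3_1 : ¬ OnLine pt3 l1 := by
  intro h
  unfold pt3 l1 at h
  rw [HLaux.onLine_mk_mk, lf_vec] at h
  exact hnzq (1) (0) (by norm_num) (by push_cast; linear_combination h - ((0) : ℂ) * homega)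

lemma ninc_3_2 : ¬ OnLine pt3 l2 := by
  intro h
  unfold pt3 l2 at h
  rw [HLaux.onLine_mk_mk, lf_vec] at h
  exact hnzq (0) (1) (by norm_num) (by push_cast; linear_combination h - ((0) : ℂ) * homega)

lemma inc_3_3 : OnLine pt3 l3 := by
  unfold pt3 l3
  rw [HLaux.onLine_mk_mk, lf_vec]
  linear_combination ((0) : ℂ) * homega

lemma inc_3_4 : OnLine pt3 l4 := by
  unfold pt3 l4
  rw [HLaux.onLine_mk_mk, lf_vec]
  linear_combination ((0) : ℂ) * homega

lemma ninc_3_5 : ¬ OnLine pt3 l5 := by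
  intro h
  unfold pt3 l5 at h
  rw [HLaux.onLine_mk_mk, lf_vec] at h
  exact hnzq (0) (1) (by norm_num) (by push_cast; linear_combination h - ((0) : ℂ) * homega)

lemma inc_3_6 : OnLine pt3 l6 := by
  unfold pt3 l6
  rw [HLaux.onLine_mk_mk, lf_vec]
  linear_combination ((0) : ℂ) * homega

lemma ninc_3_7 : ¬ OnLine pt3 l7 := by
  intro h
  unfold pt3 l7 at h
  rw [HLaux.onLine_mk_mk, lf_vec] at h
  exact hnzq (-1) (0) (by norm_num) (by push_cast; linear_combination h - ((0) : ℂ) * homega)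

lemma ninc_4_0 : ¬ OnLine pt4 l0 := by
  intro h
  unfold pt4 l0 at h
  rw [HLaux.onLine_mk_mk, lf_vec] at h
  exact hnzq (-1) (-1) (by norm_num) (by push_cast; linear_combination h - ((0) : ℂ) * homega)

lemma ninc_4_1 : ¬ OnLine pt4 l1 := by
  intro h
  unfold pt4 l1 at h
  rw [HLaux.onLine_mk_mk, lf_vec] at h
  exact hnzq (1) (0) (by norm_num) (by push_cast; linear_combination h - ((0) : ℂ) * homega)

lemma ninc_4_2 : ¬ OnLine pt4 l2 := by
  intro h
  unfold pt4 l2 at h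
  rw [HLaux.onLine_mk_mk, lf_vec] at h
  exact hnzq (0) (1) (by norm_num) (by push_cast; linear_combination h - ((0) : ℂ) * homega)

lemma ninc_4_3 : ¬ OnLine pt4 l3 := by
  intro h
  unfold pt4 l3 at h
  rw [HLaux.onLine_mk_mk, lf_vec] at h
  exact hnzq (0) (1) (by norm_num) (by push_cast; linear_combination h - ((0) : ℂ) * homega)

lemma inc_4_4 : OnLine pt4 l4 := by
  unfold pt4 l4
  rw [HLaux.onLine_mk_mk, lf_vec]
  linear_combination ((0) : ℂ) * homega

lemma inc_4_5 : OnLine pt4 l5 := by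
  unfold pt4 l5
  rw [HLaux.onLine_mk_mk, lf_vec]
  linear_combination ((0) : ℂ) * homega

lemma ninc_4_6 : ¬ OnLine pt4 l6 := by
  intro h
  unfold pt4 l6 at h
  rw [HLaux.onLine_mk_mk, lf_vec] at h
  exact hnzq (1) (0) (by norm_num) (by push_cast; linear_combination h - ((-1) : ℂ) * homega)

lemma inc_4_7 : OnLine pt4 l7 := by
  unfold pt4 l7
  rw [HLaux.onLine_mk_mk, lf_vec]
  linear_combination ((-1) : ℂ) * homega

lemma inc_5_0 : OnLine pt5 l0 := by
  unfold pt5 l0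
  rw [HLaux.onLine_mk_mk, lf_vec]
  linear_combination ((0) : ℂ) * homega

lemma ninc_5_1 : ¬ OnLine pt5 l1 := by
  intro h
  unfold pt5 l1 at h
  rw [HLaux.onLine_mk_mk, lf_vec] at h
  exact hnzq (-1) (0) (by norm_num) (by push_cast; linear_combination h - ((0) : ℂ) * homega)

lemma ninc_5_2 : ¬ OnLine pt5 l2 := by
  intro h
  unfold pt5 l2 at h
  rw [HLaux.onLine_mk_mk, lf_vec] at h
  exact hnzq (1) (0) (by norm_num) (by push_cast; linear_combination h - ((0) : ℂ) * homega)

lemma ninc_5_3 : ¬ OnLine pt5 l3 := by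
  intro h
  unfold pt5 l3 at h
  rw [HLaux.onLine_mk_mk, lf_vec] at h
  exact hnzq (1) (0) (by norm_num) (by push_cast; linear_combination h - ((0) : ℂ) * homega)

lemma ninc_5_4 : ¬ OnLine pt5 l4 := by
  intro h
  unfold pt5 l4 at h
  rw [HLaux.onLine_mk_mk, lf_vec] at h
  exact hnzq (1) (1) (by norm_num) (by push_cast; linear_combination h - ((0) : ℂ) * homega)

lemma inc_5_5 : OnLine pt5 l5 := by
  unfold pt5 l5
  rw [HLaux.onLine_mk_mk, lf_vec]
  linear_combination ((0) : ℂ) * homega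

lemma inc_5_6 : OnLine pt5 l6 := by
  unfold pt5 l6
  rw [HLaux.onLine_mk_mk, lf_vec]
  linear_combination ((0) : ℂ) * homega

lemma ninc_5_7 : ¬ OnLine pt5 l7 := by
  intro h
  unfold pt5 l7 at h
  rw [HLaux.onLine_mk_mk, lf_vec] at h
  exact hnzq (1) (0) (by norm_num) (by push_cast; linear_combination h - ((0) : ℂ) * homega)

lemma ninc_6_0 : ¬ OnLine pt6 l0 := by
  intro h
  unfold pt6 l0 at h
  rw [HLaux.onLine_mk_mk, lf_vec] at h
  exact hnzq (1) (0) (by norm_num) (by push_cast; linear_combination h - ((0) : ℂ) * homega)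

lemma inc_6_1 : OnLine pt6 l1 := by
  unfold pt6 l1
  rw [HLaux.onLine_mk_mk, lf_vec]
  linear_combination ((0) : ℂ) * homega

lemma ninc_6_2 : ¬ OnLine pt6 l2 := by
  intro h
  unfold pt6 l2 at h
  rw [HLaux.onLine_mk_mk, lf_vec] at h
  exact hnzq (-1) (-1) (by norm_num) (by push_cast; linear_combination h - ((0) : ℂ) * homega)

lemma ninc_6_3 : ¬ OnLine pt6 l3 := by
  intro h
  unfold pt6 l3 at h
  rw [HLaux.onLine_mk_mk, lf_vec] at h
  exact hnzq (-1) (0) (by norm_num) (by push_cast; linear_combination h - ((0) : ℂ) * homega)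

lemma ninc_6_4 : ¬ OnLine pt6 l4 := by
  intro h
  unfold pt6 l4 at h
  rw [HLaux.onLine_mk_mk, lf_vec] at h
  exact hnzq (-1) (-1) (by norm_num) (by push_cast; linear_combination h - ((0) : ℂ) * homega)

lemma ninc_6_5 : ¬ OnLine pt6 l5 := by
  intro h
  unfold pt6 l5 at h
  rw [HLaux.onLine_mk_mk, lf_vec] at h
  exact hnzq (0) (-1) (by norm_num) (by push_cast; linear_combination h - ((0) : ℂ) * homega)

lemma inc_6_6 : OnLine pt6 l6 := by
  unfold pt6 l6
  rw [HLaux.onLine_mk_mk, lf_vec]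
  linear_combination ((0) : ℂ) * homega

lemma inc_6_7 : OnLine pt6 l7 := by
  unfold pt6 l7
  rw [HLaux.onLine_mk_mk, lf_vec]
  linear_combination ((0) : ℂ) * homega

lemma inc_7_0 : OnLine pt7 l0 := by
  unfold pt7 l0
  rw [HLaux.onLine_mk_mk, lf_vec]
  linear_combination ((0) : ℂ) * homega

lemma ninc_7_1 : ¬ OnLine pt7 l1 := by
  intro h
  unfold pt7 l1 at h
  rw [HLaux.onLine_mk_mk, lf_vec] at h
  exact hnzq (-1) (0) (by norm_num) (by push_cast; linear_combination h - ((0) : ℂ) * homega)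

lemma inc_7_2 : OnLine pt7 l2 := by
  unfold pt7 l2
  rw [HLaux.onLine_mk_mk, lf_vec]
  linear_combination ((0) : ℂ) * homega

lemma ninc_7_3 : ¬ OnLine pt7 l3 := by
  intro h
  unfold pt7 l3 at h
  rw [HLaux.onLine_mk_mk, lf_vec] at h
  exact hnzq (1) (0) (by norm_num) (by push_cast; linear_combination h - ((0) : ℂ) * homega)

lemma ninc_7_4 : ¬ OnLine pt7 l4 := by
  intro h
  unfold pt7 l4 at h
  rw [HLaux.onLine_mk_mk, lf_vec] at h
  exact hnzq (0) (1) (by norm_num) (by push_cast; linear_combination h - ((0) : ℂ) * homega)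

lemma ninc_7_5 : ¬ OnLine pt7 l5 := by
  intro h
  unfold pt7 l5 at h
  rw [HLaux.onLine_mk_mk, lf_vec] at h
  exact hnzq (-1) (0) (by norm_num) (by push_cast; linear_combination h - ((0) : ℂ) * homega)

lemma ninc_7_6 : ¬ OnLine pt7 l6 := by
  intro h
  unfold pt7 l6 at h
  rw [HLaux.onLine_mk_mk, lf_vec] at h
  exact hnzq (-1) (0) (by norm_num) (by push_cast; linear_combination h - ((0) : ℂ) * homega)

lemma inc_7_7 : OnLine pt7 l7 := by
  unfold pt7 l7
  rw [HLaux.onLine_mk_mk, lf_vec]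
  linear_combination ((0) : ℂ) * homega

lemma inc_8_0 : OnLine pt8 l0 := by
  unfold pt8 l0
  rw [HLaux.onLine_mk_mk, lf_vec]
  linear_combination ((0) : ℂ) * homega

lemma ninc_8_1 : ¬ OnLine pt8 l1 := by
  intro h
  unfold pt8 l1 at h
  rw [HLaux.onLine_mk_mk, lf_vec] at h
  exact hnzq (-1) (0) (by norm_num) (by push_cast; linear_combination h - ((0) : ℂ) * homega)

lemma ninc_8_2 : ¬ OnLine pt8 l2 := by
  intro h
  unfold pt8 l2 at h
  rw [HLaux.onLine_mk_mk, lf_vec] at h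
  exact hnzq (0) (-1) (by norm_num) (by push_cast; linear_combination h - ((0) : ℂ) * homega)

lemma ninc_8_3 : ¬ OnLine pt8 l3 := by
  intro h
  unfold pt8 l3 at h
  rw [HLaux.onLine_mk_mk, lf_vec] at h
  exact hnzq (1) (0) (by norm_num) (by push_cast; linear_combination h - ((0) : ℂ) * homega)

lemma inc_8_4 : OnLine pt8 l4 := by
  unfold pt8 l4
  rw [HLaux.onLine_mk_mk, lf_vec]
  linear_combination ((0) : ℂ) * homega

lemma ninc_8_5 : ¬ OnLine pt8 l5 := by
  intro h
  unfold pt8 l5 at h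
  rw [HLaux.onLine_mk_mk, lf_vec] at h
  exact hnzq (-1) (-1) (by norm_num) (by push_cast; linear_combination h - ((0) : ℂ) * homega)

lemma ninc_8_6 : ¬ OnLine pt8 l6 := by
  intro h
  unfold pt8 l6 at h
  rw [HLaux.onLine_mk_mk, lf_vec] at h
  exact hnzq (-1) (-1) (by norm_num) (by push_cast; linear_combination h - ((0) : ℂ) * homega)

lemma ninc_8_7 : ¬ OnLine pt8 l7 := by
  intro h
  unfold pt8 l7 at h
  rw [HLaux.onLine_mk_mk, lf_vec] at h
  exact hnzq (0) (-1) (by norm_num) (by push_cast; linear_combination h - ((0) : ℂ) * homega)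

lemma ninc_9_0 : ¬ OnLine pt9 l0 := by
  intro h
  unfold pt9 l0 at h
  rw [HLaux.onLine_mk_mk, lf_vec] at h
  exact hnzq (1) (0) (by norm_num) (by push_cast; linear_combination h - ((0) : ℂ) * homega)

lemma inc_9_1 : OnLine pt9 l1 := by
  unfold pt9 l1
  rw [HLaux.onLine_mk_mk, lf_vec]
  linear_combination ((0) : ℂ) * homega

lemma ninc_9_2 : ¬ OnLine pt9 l2 := by
  intro h
  unfold pt9 l2 at h
  rw [HLaux.onLine_mk_mk, lf_vec] at h
  exact hnzq (-1) (0) (by norm_num) (by push_cast; linear_combination h - ((0) : ℂ) * homega)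

lemma ninc_9_3 : ¬ OnLine pt9 l3 := by
  intro h
  unfold pt9 l3 at h
  rw [HLaux.onLine_mk_mk, lf_vec] at h
  exact hnzq (-1) (0) (by norm_num) (by push_cast; linear_combination h - ((0) : ℂ) * homega)

lemma ninc_9_4 : ¬ OnLine pt9 l4 := by
  intro h
  unfold pt9 l4 at h
  rw [HLaux.onLine_mk_mk, lf_vec] at h
  exact hnzq (-1) (0) (by norm_num) (by push_cast; linear_combination h - ((0) : ℂ) * homega)

lemma inc_9_5 : OnLine pt9 l5 := by
  unfold pt9 l5
  rw [HLaux.onLine_mk_mk, lf_vec]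
  linear_combination ((0) : ℂ) * homega

lemma ninc_9_6 : ¬ OnLine pt9 l6 := by
  intro h
  unfold pt9 l6 at h
  rw [HLaux.onLine_mk_mk, lf_vec] at h
  exact hnzq (0) (1) (by norm_num) (by push_cast; linear_combination h - ((0) : ℂ) * homega)

lemma ninc_9_7 : ¬ OnLine pt9 l7 := by
  intro h
  unfold pt9 l7 at h
  rw [HLaux.onLine_mk_mk, lf_vec] at h
  exact hnzq (0) (1) (by norm_num) (by push_cast; linear_combination h - ((0) : ℂ) * homega)

lemma ninc_10_0 : ¬ OnLine pt10 l0 := by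
  intro h
  unfold pt10 l0 at h
  rw [HLaux.onLine_mk_mk, lf_vec] at h
  exact hnzq (-1) (0) (by norm_num) (by push_cast; linear_combination h - ((0) : ℂ) * homega)

lemma ninc_10_1 : ¬ OnLine pt10 l1 := by
  intro h
  unfold pt10 l1 at h
  rw [HLaux.onLine_mk_mk, lf_vec] at h
  exact hnzq (1) (1) (by norm_num) (by push_cast; linear_combination h - ((0) : ℂ) * homega)

lemma inc_10_2 : OnLine pt10 l2 := by
  unfold pt10 l2
  rw [HLaux.onLine_mk_mk, lf_vec]
  linear_combination ((0) : ℂ) * homega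

lemma ninc_10_3 : ¬ OnLine pt10 l3 := by
  intro h
  unfold pt10 l3 at h
  rw [HLaux.onLine_mk_mk, lf_vec] at h
  exact hnzq (0) (-1) (by norm_num) (by push_cast; linear_combination h - ((0) : ℂ) * homega)

lemma ninc_10_4 : ¬ OnLine pt10 l4 := by
  intro h
  unfold pt10 l4 at h
  rw [HLaux.onLine_mk_mk, lf_vec] at h
  exact hnzq (1) (0) (by norm_num) (by push_cast; linear_combination h - ((-1) : ℂ) * homega)

lemma ninc_10_5 : ¬ OnLine pt10 l5 := by
  intro h
  unfold pt10 l5 at h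
  rw [HLaux.onLine_mk_mk, lf_vec] at h
  exact hnzq (0) (1) (by norm_num) (by push_cast; linear_combination h - ((0) : ℂ) * homega)

lemma inc_10_6 : OnLine pt10 l6 := by
  unfold pt10 l6
  rw [HLaux.onLine_mk_mk, lf_vec]
  linear_combination ((0) : ℂ) * homega

lemma ninc_10_7 : ¬ OnLine pt10 l7 := by
  intro h
  unfold pt10 l7 at h
  rw [HLaux.onLine_mk_mk, lf_vec] at h
  exact hnzq (-1) (-1) (by norm_num) (by push_cast; linear_combination h - ((0) : ℂ) * homega)

lemma ninc_11_0 : ¬ OnLine pt11 l0 := by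
  intro h
  unfold pt11 l0 at h
  rw [HLaux.onLine_mk_mk, lf_vec] at h
  exact hnzq (-1) (0) (by norm_num) (by push_cast; linear_combination h - ((0) : ℂ) * homega)

lemma ninc_11_1 : ¬ OnLine pt11 l1 := by
  intro h
  unfold pt11 l1 at h
  rw [HLaux.onLine_mk_mk, lf_vec] at h
  exact hnzq (1) (0) (by norm_num) (by push_cast; linear_combination h - ((0) : ℂ) * homega)

lemma ninc_11_2 : ¬ OnLine pt11 l2 := by
  intro h
  unfold pt11 l2 at h
  rw [HLaux.onLine_mk_mk, lf_vec] at h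
  exact hnzq (1) (1) (by norm_num) (by push_cast; linear_combination h - ((0) : ℂ) * homega)

lemma inc_11_3 : OnLine pt11 l3 := by
  unfold pt11 l3
  rw [HLaux.onLine_mk_mk, lf_vec]
  linear_combination ((0) : ℂ) * homega

lemma ninc_11_4 : ¬ OnLine pt11 l4 := by
  intro h
  unfold pt11 l4 at h
  rw [HLaux.onLine_mk_mk, lf_vec] at h
  exact hnzq (1) (0) (by norm_num) (by push_cast; linear_combination h - ((0) : ℂ) * homega)

lemma ninc_11_5 : ¬ OnLine pt11 l5 := by
  intro h
  unfold pt11 l5 at h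
  rw [HLaux.onLine_mk_mk, lf_vec] at h
  exact hnzq (1) (1) (by norm_num) (by push_cast; linear_combination h - ((0) : ℂ) * homega)

lemma ninc_11_6 : ¬ OnLine pt11 l6 := by
  intro h
  unfold pt11 l6 at h
  rw [HLaux.onLine_mk_mk, lf_vec] at h
  exact hnzq (1) (0) (by norm_num) (by push_cast; linear_combination h - ((0) : ℂ) * homega)

lemma inc_11_7 : OnLine pt11 l7 := by
  unfold pt11 l7
  rw [HLaux.onLine_mk_mk, lf_vec]
  linear_combination ((0) : ℂ) * homega

lemma lne_0_1 : l0 ≠ l1 := fun h => ninc_5_1 (h ▸ inc_5_0)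
lemma lne_0_2 : l0 ≠ l2 := fun h => ninc_0_2 (h ▸ inc_0_0)
lemma lne_0_3 : l0 ≠ l3 := fun h => ninc_5_3 (h ▸ inc_5_0)
lemma lne_0_4 : l0 ≠ l4 := fun h => ninc_0_4 (h ▸ inc_0_0)
lemma lne_0_5 : l0 ≠ l5 := fun h => ninc_0_5 (h ▸ inc_0_0)
lemma lne_0_6 : l0 ≠ l6 := fun h => ninc_0_6 (h ▸ inc_0_0)
lemma lne_0_7 : l0 ≠ l7 := fun h => ninc_0_7 (h ▸ inc_0_0)
lemma lne_1_2 : l1 ≠ l2 := fun h => ninc_0_2 (h ▸ inc_0_1)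
lemma lne_1_3 : l1 ≠ l3 := fun h => ninc_1_3 (h ▸ inc_1_1)
lemma lne_1_4 : l1 ≠ l4 := fun h => ninc_0_4 (h ▸ inc_0_1)
lemma lne_1_5 : l1 ≠ l5 := fun h => ninc_0_5 (h ▸ inc_0_1)
lemma lne_1_6 : l1 ≠ l6 := fun h => ninc_0_6 (h ▸ inc_0_1)
lemma lne_1_7 : l1 ≠ l7 := fun h => ninc_0_7 (h ▸ inc_0_1)
lemma lne_2_3 : l2 ≠ l3 := fun h => ninc_1_3 (h ▸ inc_1_2)
lemma lne_2_4 : l2 ≠ l4 := fun h => ninc_2_4 (h ▸ inc_2_2)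
lemma lne_2_5 : l2 ≠ l5 := fun h => ninc_1_5 (h ▸ inc_1_2)
lemma lne_2_6 : l2 ≠ l6 := fun h => ninc_1_6 (h ▸ inc_1_2)
lemma lne_2_7 : l2 ≠ l7 := fun h => ninc_1_7 (h ▸ inc_1_2)
lemma lne_3_4 : l3 ≠ l4 := fun h => ninc_0_4 (h ▸ inc_0_3)
lemma lne_3_5 : l3 ≠ l5 := fun h => ninc_0_5 (h ▸ inc_0_3)
lemma lne_3_6 : l3 ≠ l6 := fun h => ninc_0_6 (h ▸ inc_0_3)
lemma lne_3_7 : l3 ≠ l7 := fun h => ninc_0_7 (h ▸ inc_0_3)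
lemma lne_4_5 : l4 ≠ l5 := fun h => ninc_1_5 (h ▸ inc_1_4)
lemma lne_4_6 : l4 ≠ l6 := fun h => ninc_1_6 (h ▸ inc_1_4)
lemma lne_4_7 : l4 ≠ l7 := fun h => ninc_1_7 (h ▸ inc_1_4)
lemma lne_5_6 : l5 ≠ l6 := fun h => ninc_2_6 (h ▸ inc_2_5)
lemma lne_5_7 : l5 ≠ l7 := fun h => ninc_2_7 (h ▸ inc_2_5)
lemma lne_6_7 : l6 ≠ l7 := fun h => ninc_3_7 (h ▸ inc_3_6)

lemma pne_0_1 : pt0 ≠ pt1 := fun h => ninc_1_0 (h ▸ inc_0_0)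
lemma pne_0_2 : pt0 ≠ pt2 := fun h => ninc_2_0 (h ▸ inc_0_0)
lemma pne_0_3 : pt0 ≠ pt3 := fun h => ninc_3_0 (h ▸ inc_0_0)
lemma pne_0_4 : pt0 ≠ pt4 := fun h => ninc_4_0 (h ▸ inc_0_0)
lemma pne_0_5 : pt0 ≠ pt5 := fun h => ninc_5_1 (h ▸ inc_0_1)
lemma pne_0_6 : pt0 ≠ pt6 := fun h => ninc_6_0 (h ▸ inc_0_0)
lemma pne_0_7 : pt0 ≠ pt7 := fun h => ninc_7_1 (h ▸ inc_0_1)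
lemma pne_0_8 : pt0 ≠ pt8 := fun h => ninc_8_1 (h ▸ inc_0_1)
lemma pne_0_9 : pt0 ≠ pt9 := fun h => ninc_9_0 (h ▸ inc_0_0)
lemma pne_0_10 : pt0 ≠ pt10 := fun h => ninc_10_0 (h ▸ inc_0_0)
lemma pne_0_11 : pt0 ≠ pt11 := fun h => ninc_11_0 (h ▸ inc_0_0)
lemma pne_1_2 : pt1 ≠ pt2 := fun h => ninc_2_1 (h ▸ inc_1_1)
lemma pne_1_3 : pt1 ≠ pt3 := fun h => ninc_3_1 (h ▸ inc_1_1)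
lemma pne_1_4 : pt1 ≠ pt4 := fun h => ninc_4_1 (h ▸ inc_1_1)
lemma pne_1_5 : pt1 ≠ pt5 := fun h => ninc_5_1 (h ▸ inc_1_1)
lemma pne_1_6 : pt1 ≠ pt6 := fun h => ninc_6_2 (h ▸ inc_1_2)
lemma pne_1_7 : pt1 ≠ pt7 := fun h => ninc_7_1 (h ▸ inc_1_1)
lemma pne_1_8 : pt1 ≠ pt8 := fun h => ninc_8_1 (h ▸ inc_1_1)
lemma pne_1_9 : pt1 ≠ pt9 := fun h => ninc_9_2 (h ▸ inc_1_2)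
lemma pne_1_10 : pt1 ≠ pt10 := fun h => ninc_10_1 (h ▸ inc_1_1)
lemma pne_1_11 : pt1 ≠ pt11 := fun h => ninc_11_1 (h ▸ inc_1_1)
lemma pne_2_3 : pt2 ≠ pt3 := fun h => ninc_3_2 (h ▸ inc_2_2)
lemma pne_2_4 : pt2 ≠ pt4 := fun h => ninc_4_2 (h ▸ inc_2_2)
lemma pne_2_5 : pt2 ≠ pt5 := fun h => ninc_5_2 (h ▸ inc_2_2)
lemma pne_2_6 : pt2 ≠ pt6 := fun h => ninc_6_2 (h ▸ inc_2_2)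
lemma pne_2_7 : pt2 ≠ pt7 := fun h => ninc_7_3 (h ▸ inc_2_3)
lemma pne_2_8 : pt2 ≠ pt8 := fun h => ninc_8_2 (h ▸ inc_2_2)
lemma pne_2_9 : pt2 ≠ pt9 := fun h => ninc_9_2 (h ▸ inc_2_2)
lemma pne_2_10 : pt2 ≠ pt10 := fun h => ninc_10_3 (h ▸ inc_2_3)
lemma pne_2_11 : pt2 ≠ pt11 := fun h => ninc_11_2 (h ▸ inc_2_2)
lemma pne_3_4 : pt3 ≠ pt4 := fun h => ninc_4_3 (h ▸ inc_3_3)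
lemma pne_3_5 : pt3 ≠ pt5 := fun h => ninc_5_3 (h ▸ inc_3_3)
lemma pne_3_6 : pt3 ≠ pt6 := fun h => ninc_6_3 (h ▸ inc_3_3)
lemma pne_3_7 : pt3 ≠ pt7 := fun h => ninc_7_3 (h ▸ inc_3_3)
lemma pne_3_8 : pt3 ≠ pt8 := fun h => ninc_8_3 (h ▸ inc_3_3)
lemma pne_3_9 : pt3 ≠ pt9 := fun h => ninc_9_3 (h ▸ inc_3_3)
lemma pne_3_10 : pt3 ≠ pt10 := fun h => ninc_10_3 (h ▸ inc_3_3)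
lemma pne_3_11 : pt3 ≠ pt11 := fun h => ninc_11_4 (h ▸ inc_3_4)
lemma pne_4_5 : pt4 ≠ pt5 := fun h => ninc_5_4 (h ▸ inc_4_4)
lemma pne_4_6 : pt4 ≠ pt6 := fun h => ninc_6_4 (h ▸ inc_4_4)
lemma pne_4_7 : pt4 ≠ pt7 := fun h => ninc_7_4 (h ▸ inc_4_4)
lemma pne_4_8 : pt4 ≠ pt8 := fun h => ninc_8_5 (h ▸ inc_4_5)
lemma pne_4_9 : pt4 ≠ pt9 := fun h => ninc_9_4 (h ▸ inc_4_4)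
lemma pne_4_10 : pt4 ≠ pt10 := fun h => ninc_10_4 (h ▸ inc_4_4)
lemma pne_4_11 : pt4 ≠ pt11 := fun h => ninc_11_4 (h ▸ inc_4_4)
lemma pne_5_6 : pt5 ≠ pt6 := fun h => ninc_6_0 (h ▸ inc_5_0)
lemma pne_5_7 : pt5 ≠ pt7 := fun h => ninc_7_5 (h ▸ inc_5_5)
lemma pne_5_8 : pt5 ≠ pt8 := fun h => ninc_8_5 (h ▸ inc_5_5)
lemma pne_5_9 : pt5 ≠ pt9 := fun h => ninc_9_0 (h ▸ inc_5_0)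
lemma pne_5_10 : pt5 ≠ pt10 := fun h => ninc_10_0 (h ▸ inc_5_0)
lemma pne_5_11 : pt5 ≠ pt11 := fun h => ninc_11_0 (h ▸ inc_5_0)
lemma pne_6_7 : pt6 ≠ pt7 := fun h => ninc_7_1 (h ▸ inc_6_1)
lemma pne_6_8 : pt6 ≠ pt8 := fun h => ninc_8_1 (h ▸ inc_6_1)
lemma pne_6_9 : pt6 ≠ pt9 := fun h => ninc_9_6 (h ▸ inc_6_6)
lemma pne_6_10 : pt6 ≠ pt10 := fun h => ninc_10_1 (h ▸ inc_6_1)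
lemma pne_6_11 : pt6 ≠ pt11 := fun h => ninc_11_1 (h ▸ inc_6_1)
lemma pne_7_8 : pt7 ≠ pt8 := fun h => ninc_8_2 (h ▸ inc_7_2)
lemma pne_7_9 : pt7 ≠ pt9 := fun h => ninc_9_0 (h ▸ inc_7_0)
lemma pne_7_10 : pt7 ≠ pt10 := fun h => ninc_10_0 (h ▸ inc_7_0)
lemma pne_7_11 : pt7 ≠ pt11 := fun h => ninc_11_0 (h ▸ inc_7_0)
lemma pne_8_9 : pt8 ≠ pt9 := fun h => ninc_9_0 (h ▸ inc_8_0)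
lemma pne_8_10 : pt8 ≠ pt10 := fun h => ninc_10_0 (h ▸ inc_8_0)
lemma pne_8_11 : pt8 ≠ pt11 := fun h => ninc_11_0 (h ▸ inc_8_0)
lemma pne_9_10 : pt9 ≠ pt10 := fun h => ninc_10_1 (h ▸ inc_9_1)
lemma pne_9_11 : pt9 ≠ pt11 := fun h => ninc_11_1 (h ▸ inc_9_1)
lemma pne_10_11 : pt10 ≠ pt11 := fun h => ninc_11_2 (h ▸ inc_10_2)

noncomputable def LL : Finset (PLine ℂ) := ({l0, l1, l2, l3, l4, l5, l6, l7} : Finset (PLine ℂ))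

lemma mem_LL (M : PLine ℂ) : M ∈ LL ↔ (M = l0 ∨ M = l1 ∨ M = l2 ∨ M = l3 ∨ M = l4 ∨ M = l5 ∨ M = l6 ∨ M = l7) := by
  unfold LL
  simp only [Finset.mem_insert, Finset.mem_singleton]

lemma hcardLL : LL.card = 8 := by
  unfold LL
  rw [Finset.card_insert_of_notMem (by simp only [Finset.mem_insert, Finset.mem_singleton]; push_neg; exact ⟨lne_0_1, lne_0_2, lne_0_3, lne_0_4, lne_0_5, lne_0_6, lne_0_7⟩),
    Finset.card_insert_of_notMem (by simp only [Finset.mem_insert, Finset.mem_singleton]; push_neg; exact ⟨lne_1_2, lne_1_3, lne_1_4, lne_1_5, lne_1_6, lne_1_7⟩),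
    Finset.card_insert_of_notMem (by simp only [Finset.mem_insert, Finset.mem_singleton]; push_neg; exact ⟨lne_2_3, lne_2_4, lne_2_5, lne_2_6, lne_2_7⟩),
    Finset.card_insert_of_notMem (by simp only [Finset.mem_insert, Finset.mem_singleton]; push_neg; exact ⟨lne_3_4, lne_3_5, lne_3_6, lne_3_7⟩),
    Finset.card_insert_of_notMem (by simp only [Finset.mem_insert, Finset.mem_singleton]; push_neg; exact ⟨lne_4_5, lne_4_6, lne_4_7⟩),
    Finset.card_insert_of_notMem (by simp only [Finset.mem_insert, Finset.mem_singleton]; push_neg; exact ⟨lne_5_6, lne_5_7⟩),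
    Finset.card_insert_of_notMem (by simp only [Finset.mem_singleton]; exact lne_6_7), Finset.card_singleton]

lemma multpt0 : mult LL pt0 = 3 := by
  rw [HLaux.mult_eq]
  have he : HLaux.FL LL pt0 = ({l0, l1, l3} : Finset (PLine ℂ)) := by
    ext M
    simp only [HLaux.mem_FL, mem_LL, Finset.mem_insert, Finset.mem_singleton]
    constructor
    · rintro ⟨rfl|rfl|rfl|rfl|rfl|rfl|rfl|rfl, hOn⟩
      · exact Or.inl (rfl)
      · exact Or.inr (Or.inl (rfl))
      · exact absurd hOn ninc_0_2
      · exact Or.inr (Or.inr (rfl))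
      · exact absurd hOn ninc_0_4
      · exact absurd hOn ninc_0_5
      · exact absurd hOn ninc_0_6
      · exact absurd hOn ninc_0_7
    · rintro (rfl|rfl|rfl)
      · exact ⟨Or.inl (rfl), inc_0_0⟩
      · exact ⟨Or.inr (Or.inl (rfl)), inc_0_1⟩
      · exact ⟨Or.inr (Or.inr (Or.inr (Or.inl (rfl)))), inc_0_3⟩
  rw [he]
  rw [Finset.card_insert_of_notMem (by simp only [Finset.mem_insert, Finset.mem_singleton]; push_neg; exact ⟨lne_0_1, lne_0_3⟩),
    Finset.card_insert_of_notMem (by simp only [Finset.mem_singleton]; exact lne_1_3), Finset.card_singleton]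

lemma multpt1 : mult LL pt1 = 3 := by
  rw [HLaux.mult_eq]
  have he : HLaux.FL LL pt1 = ({l1, l2, l4} : Finset (PLine ℂ)) := by
    ext M
    simp only [HLaux.mem_FL, mem_LL, Finset.mem_insert, Finset.mem_singleton]
    constructor
    · rintro ⟨rfl|rfl|rfl|rfl|rfl|rfl|rfl|rfl, hOn⟩
      · exact absurd hOn ninc_1_0
      · exact Or.inl (rfl)
      · exact Or.inr (Or.inl (rfl))
      · exact absurd hOn ninc_1_3
      · exact Or.inr (Or.inr (rfl))
      · exact absurd hOn ninc_1_5
      · exact absurd hOn ninc_1_6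
      · exact absurd hOn ninc_1_7
    · rintro (rfl|rfl|rfl)
      · exact ⟨Or.inr (Or.inl (rfl)), inc_1_1⟩
      · exact ⟨Or.inr (Or.inr (Or.inl (rfl))), inc_1_2⟩
      · exact ⟨Or.inr (Or.inr (Or.inr (Or.inr (Or.inl (rfl))))), inc_1_4⟩
  rw [he]
  rw [Finset.card_insert_of_notMem (by simp only [Finset.mem_insert, Finset.mem_singleton]; push_neg; exact ⟨lne_1_2, lne_1_4⟩),
    Finset.card_insert_of_notMem (by simp only [Finset.mem_singleton]; exact lne_2_4), Finset.card_singleton]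

lemma multpt2 : mult LL pt2 = 3 := by
  rw [HLaux.mult_eq]
  have he : HLaux.FL LL pt2 = ({l2, l3, l5} : Finset (PLine ℂ)) := by
    ext M
    simp only [HLaux.mem_FL, mem_LL, Finset.mem_insert, Finset.mem_singleton]
    constructor
    · rintro ⟨rfl|rfl|rfl|rfl|rfl|rfl|rfl|rfl, hOn⟩
      · exact absurd hOn ninc_2_0
      · exact absurd hOn ninc_2_1
      · exact Or.inl (rfl)
      · exact Or.inr (Or.inl (rfl))
      · exact absurd hOn ninc_2_4
      · exact Or.inr (Or.inr (rfl))
      · exact absurd hOn ninc_2_6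
      · exact absurd hOn ninc_2_7
    · rintro (rfl|rfl|rfl)
      · exact ⟨Or.inr (Or.inr (Or.inl (rfl))), inc_2_2⟩
      · exact ⟨Or.inr (Or.inr (Or.inr (Or.inl (rfl)))), inc_2_3⟩
      · exact ⟨Or.inr (Or.inr (Or.inr (Or.inr (Or.inr (Or.inl (rfl)))))), inc_2_5⟩
  rw [he]
  rw [Finset.card_insert_of_notMem (by simp only [Finset.mem_insert, Finset.mem_singleton]; push_neg; exact ⟨lne_2_3, lne_2_5⟩),
    Finset.card_insert_of_notMem (by simp only [Finset.mem_singleton]; exact lne_3_5), Finset.card_singleton]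

lemma multpt3 : mult LL pt3 = 3 := by
  rw [HLaux.mult_eq]
  have he : HLaux.FL LL pt3 = ({l3, l4, l6} : Finset (PLine ℂ)) := by
    ext M
    simp only [HLaux.mem_FL, mem_LL, Finset.mem_insert, Finset.mem_singleton]
    constructor
    · rintro ⟨rfl|rfl|rfl|rfl|rfl|rfl|rfl|rfl, hOn⟩
      · exact absurd hOn ninc_3_0
      · exact absurd hOn ninc_3_1
      · exact absurd hOn ninc_3_2
      · exact Or.inl (rfl)
      · exact Or.inr (Or.inl (rfl))
      · exact absurd hOn ninc_3_5
      · exact Or.inr (Or.inr (rfl))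
      · exact absurd hOn ninc_3_7
    · rintro (rfl|rfl|rfl)
      · exact ⟨Or.inr (Or.inr (Or.inr (Or.inl (rfl)))), inc_3_3⟩
      · exact ⟨Or.inr (Or.inr (Or.inr (Or.inr (Or.inl (rfl))))), inc_3_4⟩
      · exact ⟨Or.inr (Or.inr (Or.inr (Or.inr (Or.inr (Or.inr (Or.inl (rfl))))))), inc_3_6⟩
  rw [he]
  rw [Finset.card_insert_of_notMem (by simp only [Finset.mem_insert, Finset.mem_singleton]; push_neg; exact ⟨lne_3_4, lne_3_6⟩),
    Finset.card_insert_of_notMem (by simp only [Finset.mem_singleton]; exact lne_4_6), Finset.card_singleton]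

lemma multpt4 : mult LL pt4 = 3 := by
  rw [HLaux.mult_eq]
  have he : HLaux.FL LL pt4 = ({l4, l5, l7} : Finset (PLine ℂ)) := by
    ext M
    simp only [HLaux.mem_FL, mem_LL, Finset.mem_insert, Finset.mem_singleton]
    constructor
    · rintro ⟨rfl|rfl|rfl|rfl|rfl|rfl|rfl|rfl, hOn⟩
      · exact absurd hOn ninc_4_0
      · exact absurd hOn ninc_4_1
      · exact absurd hOn ninc_4_2
      · exact absurd hOn ninc_4_3
      · exact Or.inl (rfl)
      · exact Or.inr (Or.inl (rfl))
      · exact absurd hOn ninc_4_6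
      · exact Or.inr (Or.inr (rfl))
    · rintro (rfl|rfl|rfl)
      · exact ⟨Or.inr (Or.inr (Or.inr (Or.inr (Or.inl (rfl))))), inc_4_4⟩
      · exact ⟨Or.inr (Or.inr (Or.inr (Or.inr (Or.inr (Or.inl (rfl)))))), inc_4_5⟩
      · exact ⟨Or.inr (Or.inr (Or.inr (Or.inr (Or.inr (Or.inr (Or.inr (rfl))))))), inc_4_7⟩
  rw [he]
  rw [Finset.card_insert_of_notMem (by simp only [Finset.mem_insert, Finset.mem_singleton]; push_neg; exact ⟨lne_4_5, lne_4_7⟩),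
    Finset.card_insert_of_notMem (by simp only [Finset.mem_singleton]; exact lne_5_7), Finset.card_singleton]

lemma multpt5 : mult LL pt5 = 3 := by
  rw [HLaux.mult_eq]
  have he : HLaux.FL LL pt5 = ({l0, l5, l6} : Finset (PLine ℂ)) := by
    ext M
    simp only [HLaux.mem_FL, mem_LL, Finset.mem_insert, Finset.mem_singleton]
    constructor
    · rintro ⟨rfl|rfl|rfl|rfl|rfl|rfl|rfl|rfl, hOn⟩
      · exact Or.inl (rfl)
      · exact absurd hOn ninc_5_1
      · exact absurd hOn ninc_5_2
      · exact absurd hOn ninc_5_3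
      · exact absurd hOn ninc_5_4
      · exact Or.inr (Or.inl (rfl))
      · exact Or.inr (Or.inr (rfl))
      · exact absurd hOn ninc_5_7
    · rintro (rfl|rfl|rfl)
      · exact ⟨Or.inl (rfl), inc_5_0⟩
      · exact ⟨Or.inr (Or.inr (Or.inr (Or.inr (Or.inr (Or.inl (rfl)))))), inc_5_5⟩
      · exact ⟨Or.inr (Or.inr (Or.inr (Or.inr (Or.inr (Or.inr (Or.inl (rfl))))))), inc_5_6⟩
  rw [he]
  rw [Finset.card_insert_of_notMem (by simp only [Finset.mem_insert, Finset.mem_singleton]; push_neg; exact ⟨lne_0_5, lne_0_6⟩),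
    Finset.card_insert_of_notMem (by simp only [Finset.mem_singleton]; exact lne_5_6), Finset.card_singleton]

lemma multpt6 : mult LL pt6 = 3 := by
  rw [HLaux.mult_eq]
  have he : HLaux.FL LL pt6 = ({l1, l6, l7} : Finset (PLine ℂ)) := by
    ext M
    simp only [HLaux.mem_FL, mem_LL, Finset.mem_insert, Finset.mem_singleton]
    constructor
    · rintro ⟨rfl|rfl|rfl|rfl|rfl|rfl|rfl|rfl, hOn⟩
      · exact absurd hOn ninc_6_0
      · exact Or.inl (rfl)
      · exact absurd hOn ninc_6_2
      · exact absurd hOn ninc_6_3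
      · exact absurd hOn ninc_6_4
      · exact absurd hOn ninc_6_5
      · exact Or.inr (Or.inl (rfl))
      · exact Or.inr (Or.inr (rfl))
    · rintro (rfl|rfl|rfl)
      · exact ⟨Or.inr (Or.inl (rfl)), inc_6_1⟩
      · exact ⟨Or.inr (Or.inr (Or.inr (Or.inr (Or.inr (Or.inr (Or.inl (rfl))))))), inc_6_6⟩
      · exact ⟨Or.inr (Or.inr (Or.inr (Or.inr (Or.inr (Or.inr (Or.inr (rfl))))))), inc_6_7⟩
  rw [he]
  rw [Finset.card_insert_of_notMem (by simp only [Finset.mem_insert, Finset.mem_singleton]; push_neg; exact ⟨lne_1_6, lne_1_7⟩),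
    Finset.card_insert_of_notMem (by simp only [Finset.mem_singleton]; exact lne_6_7), Finset.card_singleton]

lemma multpt7 : mult LL pt7 = 3 := by
  rw [HLaux.mult_eq]
  have he : HLaux.FL LL pt7 = ({l0, l2, l7} : Finset (PLine ℂ)) := by
    ext M
    simp only [HLaux.mem_FL, mem_LL, Finset.mem_insert, Finset.mem_singleton]
    constructor
    · rintro ⟨rfl|rfl|rfl|rfl|rfl|rfl|rfl|rfl, hOn⟩
      · exact Or.inl (rfl)
      · exact absurd hOn ninc_7_1
      · exact Or.inr (Or.inl (rfl))
      · exact absurd hOn ninc_7_3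
      · exact absurd hOn ninc_7_4
      · exact absurd hOn ninc_7_5
      · exact absurd hOn ninc_7_6
      · exact Or.inr (Or.inr (rfl))
    · rintro (rfl|rfl|rfl)
      · exact ⟨Or.inl (rfl), inc_7_0⟩
      · exact ⟨Or.inr (Or.inr (Or.inl (rfl))), inc_7_2⟩
      · exact ⟨Or.inr (Or.inr (Or.inr (Or.inr (Or.inr (Or.inr (Or.inr (rfl))))))), inc_7_7⟩
  rw [he]
  rw [Finset.card_insert_of_notMem (by simp only [Finset.mem_insert, Finset.mem_singleton]; push_neg; exact ⟨lne_0_2, lne_0_7⟩),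
    Finset.card_insert_of_notMem (by simp only [Finset.mem_singleton]; exact lne_2_7), Finset.card_singleton]

lemma multpt8 : mult LL pt8 = 2 := by
  rw [HLaux.mult_eq]
  have he : HLaux.FL LL pt8 = ({l0, l4} : Finset (PLine ℂ)) := by
    ext M
    simp only [HLaux.mem_FL, mem_LL, Finset.mem_insert, Finset.mem_singleton]
    constructor
    · rintro ⟨rfl|rfl|rfl|rfl|rfl|rfl|rfl|rfl, hOn⟩
      · exact Or.inl (rfl)
      · exact absurd hOn ninc_8_1
      · exact absurd hOn ninc_8_2
      · exact absurd hOn ninc_8_3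
      · exact Or.inr (rfl)
      · exact absurd hOn ninc_8_5
      · exact absurd hOn ninc_8_6
      · exact absurd hOn ninc_8_7
    · rintro (rfl|rfl)
      · exact ⟨Or.inl (rfl), inc_8_0⟩
      · exact ⟨Or.inr (Or.inr (Or.inr (Or.inr (Or.inl (rfl))))), inc_8_4⟩
  rw [he]
  rw [Finset.card_insert_of_notMem (by simp only [Finset.mem_singleton]; exact lne_0_4), Finset.card_singleton]

lemma multpt9 : mult LL pt9 = 2 := by
  rw [HLaux.mult_eq]
  have he : HLaux.FL LL pt9 = ({l1, l5} : Finset (PLine ℂ)) := by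
    ext M
    simp only [HLaux.mem_FL, mem_LL, Finset.mem_insert, Finset.mem_singleton]
    constructor
    · rintro ⟨rfl|rfl|rfl|rfl|rfl|rfl|rfl|rfl, hOn⟩
      · exact absurd hOn ninc_9_0
      · exact Or.inl (rfl)
      · exact absurd hOn ninc_9_2
      · exact absurd hOn ninc_9_3
      · exact absurd hOn ninc_9_4
      · exact Or.inr (rfl)
      · exact absurd hOn ninc_9_6
      · exact absurd hOn ninc_9_7
    · rintro (rfl|rfl)
      · exact ⟨Or.inr (Or.inl (rfl)), inc_9_1⟩
      · exact ⟨Or.inr (Or.inr (Or.inr (Or.inr (Or.inr (Or.inl (rfl)))))), inc_9_5⟩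
  rw [he]
  rw [Finset.card_insert_of_notMem (by simp only [Finset.mem_singleton]; exact lne_1_5), Finset.card_singleton]

lemma multpt10 : mult LL pt10 = 2 := by
  rw [HLaux.mult_eq]
  have he : HLaux.FL LL pt10 = ({l2, l6} : Finset (PLine ℂ)) := by
    ext M
    simp only [HLaux.mem_FL, mem_LL, Finset.mem_insert, Finset.mem_singleton]
    constructor
    · rintro ⟨rfl|rfl|rfl|rfl|rfl|rfl|rfl|rfl, hOn⟩
      · exact absurd hOn ninc_10_0
      · exact absurd hOn ninc_10_1
      · exact Or.inl (rfl)
      · exact absurd hOn ninc_10_3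
      · exact absurd hOn ninc_10_4
      · exact absurd hOn ninc_10_5
      · exact Or.inr (rfl)
      · exact absurd hOn ninc_10_7
    · rintro (rfl|rfl)
      · exact ⟨Or.inr (Or.inr (Or.inl (rfl))), inc_10_2⟩
      · exact ⟨Or.inr (Or.inr (Or.inr (Or.inr (Or.inr (Or.inr (Or.inl (rfl))))))), inc_10_6⟩
  rw [he]
  rw [Finset.card_insert_of_notMem (by simp only [Finset.mem_singleton]; exact lne_2_6), Finset.card_singleton]

lemma multpt11 : mult LL pt11 = 2 := by
  rw [HLaux.mult_eq]
  have he : HLaux.FL LL pt11 = ({l3, l7} : Finset (PLine ℂ)) := by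
    ext M
    simp only [HLaux.mem_FL, mem_LL, Finset.mem_insert, Finset.mem_singleton]
    constructor
    · rintro ⟨rfl|rfl|rfl|rfl|rfl|rfl|rfl|rfl, hOn⟩
      · exact absurd hOn ninc_11_0
      · exact absurd hOn ninc_11_1
      · exact absurd hOn ninc_11_2
      · exact Or.inl (rfl)
      · exact absurd hOn ninc_11_4
      · exact absurd hOn ninc_11_5
      · exact absurd hOn ninc_11_6
      · exact Or.inr (rfl)
    · rintro (rfl|rfl)
      · exact ⟨Or.inr (Or.inr (Or.inr (Or.inl (rfl)))), inc_11_3⟩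
      · exact ⟨Or.inr (Or.inr (Or.inr (Or.inr (Or.inr (Or.inr (Or.inr (rfl))))))), inc_11_7⟩
  rw [he]
  rw [Finset.card_insert_of_notMem (by simp only [Finset.mem_singleton]; exact lne_3_7), Finset.card_singleton]

noncomputable def S12 : Finset (PPoint ℂ) := ({pt0, pt1, pt2, pt3, pt4, pt5, pt6, pt7, pt8, pt9, pt10, pt11} : Finset (PPoint ℂ))

lemma hS12card : S12.card = 12 := by
  unfold S12
  rw [Finset.card_insert_of_notMem (by simp only [Finset.mem_insert, Finset.mem_singleton]; push_neg; exact ⟨pne_0_1, pne_0_2, pne_0_3, pne_0_4, pne_0_5, pne_0_6, pne_0_7, pne_0_8, pne_0_9, pne_0_10, pne_0_11⟩),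
    Finset.card_insert_of_notMem (by simp only [Finset.mem_insert, Finset.mem_singleton]; push_neg; exact ⟨pne_1_2, pne_1_3, pne_1_4, pne_1_5, pne_1_6, pne_1_7, pne_1_8, pne_1_9, pne_1_10, pne_1_11⟩),
    Finset.card_insert_of_notMem (by simp only [Finset.mem_insert, Finset.mem_singleton]; push_neg; exact ⟨pne_2_3, pne_2_4, pne_2_5, pne_2_6, pne_2_7, pne_2_8, pne_2_9, pne_2_10, pne_2_11⟩),
    Finset.card_insert_of_notMem (by simp only [Finset.mem_insert, Finset.mem_singleton]; push_neg; exact ⟨pne_3_4, pne_3_5, pne_3_6, pne_3_7, pne_3_8, pne_3_9, pne_3_10, pne_3_11⟩),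
    Finset.card_insert_of_notMem (by simp only [Finset.mem_insert, Finset.mem_singleton]; push_neg; exact ⟨pne_4_5, pne_4_6, pne_4_7, pne_4_8, pne_4_9, pne_4_10, pne_4_11⟩),
    Finset.card_insert_of_notMem (by simp only [Finset.mem_insert, Finset.mem_singleton]; push_neg; exact ⟨pne_5_6, pne_5_7, pne_5_8, pne_5_9, pne_5_10, pne_5_11⟩),
    Finset.card_insert_of_notMem (by simp only [Finset.mem_insert, Finset.mem_singleton]; push_neg; exact ⟨pne_6_7, pne_6_8, pne_6_9, pne_6_10, pne_6_11⟩),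
    Finset.card_insert_of_notMem (by simp only [Finset.mem_insert, Finset.mem_singleton]; push_neg; exact ⟨pne_7_8, pne_7_9, pne_7_10, pne_7_11⟩),
    Finset.card_insert_of_notMem (by simp only [Finset.mem_insert, Finset.mem_singleton]; push_neg; exact ⟨pne_8_9, pne_8_10, pne_8_11⟩),
    Finset.card_insert_of_notMem (by simp only [Finset.mem_insert, Finset.mem_singleton]; push_neg; exact ⟨pne_9_10, pne_9_11⟩),
    Finset.card_insert_of_notMem (by simp only [Finset.mem_singleton]; exact pne_10_11), Finset.card_singleton]

lemma singeq : SingPts LL = (↑S12 : Set (PPoint ℂ)) := by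
  ext P
  unfold S12
  simp only [SingPts, Set.mem_setOf_eq, Finset.coe_insert, Set.mem_insert_iff,
    Finset.coe_singleton, Set.mem_singleton_iff]
  constructor
  · intro h2
    rw [HLaux.mult_eq] at h2
    have h1 : 1 < (HLaux.FL LL P).card := by omega
    obtain ⟨M, hM, M', hM', hne⟩ := Finset.one_lt_card.1 h1
    obtain ⟨hM1, hM2⟩ := HLaux.mem_FL.1 hM
    obtain ⟨hM1', hM2'⟩ := HLaux.mem_FL.1 hM'
    rw [mem_LL] at hM1 hM1'
    rcases hM1 with rfl|rfl|rfl|rfl|rfl|rfl|rfl|rfl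
    · rcases hM1' with rfl|rfl|rfl|rfl|rfl|rfl|rfl|rfl
      · exact absurd rfl hne
      · exact Or.inl ((HLaux.unique_common lne_0_1 inc_0_0 inc_0_1 hM2 hM2').symm)
      · exact Or.inr (Or.inr (Or.inr (Or.inr (Or.inr (Or.inr (Or.inr (Or.inl ((HLaux.unique_common lne_0_2 inc_7_0 inc_7_2 hM2 hM2').symm))))))))
      · exact Or.inl ((HLaux.unique_common lne_0_3 inc_0_0 inc_0_3 hM2 hM2').symm)
      · exact Or.inr (Or.inr (Or.inr (Or.inr (Or.inr (Or.inr (Or.inr (Or.inr (Or.inl ((HLaux.unique_common lne_0_4 inc_8_0 inc_8_4 hM2 hM2').symm)))))))))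
      · exact Or.inr (Or.inr (Or.inr (Or.inr (Or.inr (Or.inl ((HLaux.unique_common lne_0_5 inc_5_0 inc_5_5 hM2 hM2').symm))))))
      · exact Or.inr (Or.inr (Or.inr (Or.inr (Or.inr (Or.inl ((HLaux.unique_common lne_0_6 inc_5_0 inc_5_6 hM2 hM2').symm))))))
      · exact Or.inr (Or.inr (Or.inr (Or.inr (Or.inr (Or.inr (Or.inr (Or.inl ((HLaux.unique_common lne_0_7 inc_7_0 inc_7_7 hM2 hM2').symm))))))))
    · rcases hM1' with rfl|rfl|rfl|rfl|rfl|rfl|rfl|rfl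
      · exact Or.inl ((HLaux.unique_common (lne_0_1).symm inc_0_1 inc_0_0 hM2 hM2').symm)
      · exact absurd rfl hne
      · exact Or.inr (Or.inl ((HLaux.unique_common lne_1_2 inc_1_1 inc_1_2 hM2 hM2').symm))
      · exact Or.inl ((HLaux.unique_common lne_1_3 inc_0_1 inc_0_3 hM2 hM2').symm)
      · exact Or.inr (Or.inl ((HLaux.unique_common lne_1_4 inc_1_1 inc_1_4 hM2 hM2').symm))
      · exact Or.inr (Or.inr (Or.inr (Or.inr (Or.inr (Or.inr (Or.inr (Or.inr (Or.inr (Or.inl ((HLaux.unique_common lne_1_5 inc_9_1 inc_9_5 hM2 hM2').symm))))))))))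
      · exact Or.inr (Or.inr (Or.inr (Or.inr (Or.inr (Or.inr (Or.inl ((HLaux.unique_common lne_1_6 inc_6_1 inc_6_6 hM2 hM2').symm)))))))
      · exact Or.inr (Or.inr (Or.inr (Or.inr (Or.inr (Or.inr (Or.inl ((HLaux.unique_common lne_1_7 inc_6_1 inc_6_7 hM2 hM2').symm)))))))
    · rcases hM1' with rfl|rfl|rfl|rfl|rfl|rfl|rfl|rfl
      · exact Or.inr (Or.inr (Or.inr (Or.inr (Or.inr (Or.inr (Or.inr (Or.inl ((HLaux.unique_common (lne_0_2).symm inc_7_2 inc_7_0 hM2 hM2').symm))))))))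
      · exact Or.inr (Or.inl ((HLaux.unique_common (lne_1_2).symm inc_1_2 inc_1_1 hM2 hM2').symm))
      · exact absurd rfl hne
      · exact Or.inr (Or.inr (Or.inl ((HLaux.unique_common lne_2_3 inc_2_2 inc_2_3 hM2 hM2').symm)))
      · exact Or.inr (Or.inl ((HLaux.unique_common lne_2_4 inc_1_2 inc_1_4 hM2 hM2').symm))
      · exact Or.inr (Or.inr (Or.inl ((HLaux.unique_common lne_2_5 inc_2_2 inc_2_5 hM2 hM2').symm)))
      · exact Or.inr (Or.inr (Or.inr (Or.inr (Or.inr (Or.inr (Or.inr (Or.inr (Or.inr (Or.inr (Or.inl ((HLaux.unique_common lne_2_6 inc_10_2 inc_10_6 hM2 hM2').symm)))))))))))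
      · exact Or.inr (Or.inr (Or.inr (Or.inr (Or.inr (Or.inr (Or.inr (Or.inl ((HLaux.unique_common lne_2_7 inc_7_2 inc_7_7 hM2 hM2').symm))))))))
    · rcases hM1' with rfl|rfl|rfl|rfl|rfl|rfl|rfl|rfl
      · exact Or.inl ((HLaux.unique_common (lne_0_3).symm inc_0_3 inc_0_0 hM2 hM2').symm)
      · exact Or.inl ((HLaux.unique_common (lne_1_3).symm inc_0_3 inc_0_1 hM2 hM2').symm)
      · exact Or.inr (Or.inr (Or.inl ((HLaux.unique_common (lne_2_3).symm inc_2_3 inc_2_2 hM2 hM2').symm)))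
      · exact absurd rfl hne
      · exact Or.inr (Or.inr (Or.inr (Or.inl ((HLaux.unique_common lne_3_4 inc_3_3 inc_3_4 hM2 hM2').symm))))
      · exact Or.inr (Or.inr (Or.inl ((HLaux.unique_common lne_3_5 inc_2_3 inc_2_5 hM2 hM2').symm)))
      · exact Or.inr (Or.inr (Or.inr (Or.inl ((HLaux.unique_common lne_3_6 inc_3_3 inc_3_6 hM2 hM2').symm))))
      · exact Or.inr (Or.inr (Or.inr (Or.inr (Or.inr (Or.inr (Or.inr (Or.inr (Or.inr (Or.inr (Or.inr ((HLaux.unique_common lne_3_7 inc_11_3 inc_11_7 hM2 hM2').symm)))))))))))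
    · rcases hM1' with rfl|rfl|rfl|rfl|rfl|rfl|rfl|rfl
      · exact Or.inr (Or.inr (Or.inr (Or.inr (Or.inr (Or.inr (Or.inr (Or.inr (Or.inl ((HLaux.unique_common (lne_0_4).symm inc_8_4 inc_8_0 hM2 hM2').symm)))))))))
      · exact Or.inr (Or.inl ((HLaux.unique_common (lne_1_4).symm inc_1_4 inc_1_1 hM2 hM2').symm))
      · exact Or.inr (Or.inl ((HLaux.unique_common (lne_2_4).symm inc_1_4 inc_1_2 hM2 hM2').symm))
      · exact Or.inr (Or.inr (Or.inr (Or.inl ((HLaux.unique_common (lne_3_4).symm inc_3_4 inc_3_3 hM2 hM2').symm))))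
      · exact absurd rfl hne
      · exact Or.inr (Or.inr (Or.inr (Or.inr (Or.inl ((HLaux.unique_common lne_4_5 inc_4_4 inc_4_5 hM2 hM2').symm)))))
      · exact Or.inr (Or.inr (Or.inr (Or.inl ((HLaux.unique_common lne_4_6 inc_3_4 inc_3_6 hM2 hM2').symm))))
      · exact Or.inr (Or.inr (Or.inr (Or.inr (Or.inl ((HLaux.unique_common lne_4_7 inc_4_4 inc_4_7 hM2 hM2').symm)))))
    · rcases hM1' with rfl|rfl|rfl|rfl|rfl|rfl|rfl|rfl
      · exact Or.inr (Or.inr (Or.inr (Or.inr (Or.inr (Or.inl ((HLaux.unique_common (lne_0_5).symm inc_5_5 inc_5_0 hM2 hM2').symm))))))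
      · exact Or.inr (Or.inr (Or.inr (Or.inr (Or.inr (Or.inr (Or.inr (Or.inr (Or.inr (Or.inl ((HLaux.unique_common (lne_1_5).symm inc_9_5 inc_9_1 hM2 hM2').symm))))))))))
      · exact Or.inr (Or.inr (Or.inl ((HLaux.unique_common (lne_2_5).symm inc_2_5 inc_2_2 hM2 hM2').symm)))
      · exact Or.inr (Or.inr (Or.inl ((HLaux.unique_common (lne_3_5).symm inc_2_5 inc_2_3 hM2 hM2').symm)))
      · exact Or.inr (Or.inr (Or.inr (Or.inr (Or.inl ((HLaux.unique_common (lne_4_5).symm inc_4_5 inc_4_4 hM2 hM2').symm)))))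
      · exact absurd rfl hne
      · exact Or.inr (Or.inr (Or.inr (Or.inr (Or.inr (Or.inl ((HLaux.unique_common lne_5_6 inc_5_5 inc_5_6 hM2 hM2').symm))))))
      · exact Or.inr (Or.inr (Or.inr (Or.inr (Or.inl ((HLaux.unique_common lne_5_7 inc_4_5 inc_4_7 hM2 hM2').symm)))))
    · rcases hM1' with rfl|rfl|rfl|rfl|rfl|rfl|rfl|rfl
      · exact Or.inr (Or.inr (Or.inr (Or.inr (Or.inr (Or.inl ((HLaux.unique_common (lne_0_6).symm inc_5_6 inc_5_0 hM2 hM2').symm))))))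
      · exact Or.inr (Or.inr (Or.inr (Or.inr (Or.inr (Or.inr (Or.inl ((HLaux.unique_common (lne_1_6).symm inc_6_6 inc_6_1 hM2 hM2').symm)))))))
      · exact Or.inr (Or.inr (Or.inr (Or.inr (Or.inr (Or.inr (Or.inr (Or.inr (Or.inr (Or.inr (Or.inl ((HLaux.unique_common (lne_2_6).symm inc_10_6 inc_10_2 hM2 hM2').symm)))))))))))
      · exact Or.inr (Or.inr (Or.inr (Or.inl ((HLaux.unique_common (lne_3_6).symm inc_3_6 inc_3_3 hM2 hM2').symm))))
      · exact Or.inr (Or.inr (Or.inr (Or.inl ((HLaux.unique_common (lne_4_6).symm inc_3_6 inc_3_4 hM2 hM2').symm))))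
      · exact Or.inr (Or.inr (Or.inr (Or.inr (Or.inr (Or.inl ((HLaux.unique_common (lne_5_6).symm inc_5_6 inc_5_5 hM2 hM2').symm))))))
      · exact absurd rfl hne
      · exact Or.inr (Or.inr (Or.inr (Or.inr (Or.inr (Or.inr (Or.inl ((HLaux.unique_common lne_6_7 inc_6_6 inc_6_7 hM2 hM2').symm)))))))
    · rcases hM1' with rfl|rfl|rfl|rfl|rfl|rfl|rfl|rfl
      · exact Or.inr (Or.inr (Or.inr (Or.inr (Or.inr (Or.inr (Or.inr (Or.inl ((HLaux.unique_common (lne_0_7).symm inc_7_7 inc_7_0 hM2 hM2').symm))))))))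
      · exact Or.inr (Or.inr (Or.inr (Or.inr (Or.inr (Or.inr (Or.inl ((HLaux.unique_common (lne_1_7).symm inc_6_7 inc_6_1 hM2 hM2').symm)))))))
      · exact Or.inr (Or.inr (Or.inr (Or.inr (Or.inr (Or.inr (Or.inr (Or.inl ((HLaux.unique_common (lne_2_7).symm inc_7_7 inc_7_2 hM2 hM2').symm))))))))
      · exact Or.inr (Or.inr (Or.inr (Or.inr (Or.inr (Or.inr (Or.inr (Or.inr (Or.inr (Or.inr (Or.inr ((HLaux.unique_common (lne_3_7).symm inc_11_7 inc_11_3 hM2 hM2').symm)))))))))))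
      · exact Or.inr (Or.inr (Or.inr (Or.inr (Or.inl ((HLaux.unique_common (lne_4_7).symm inc_4_7 inc_4_4 hM2 hM2').symm)))))
      · exact Or.inr (Or.inr (Or.inr (Or.inr (Or.inl ((HLaux.unique_common (lne_5_7).symm inc_4_7 inc_4_5 hM2 hM2').symm)))))
      · exact Or.inr (Or.inr (Or.inr (Or.inr (Or.inr (Or.inr (Or.inl ((HLaux.unique_common (lne_6_7).symm inc_6_7 inc_6_6 hM2 hM2').symm)))))))
      · exact absurd rfl hne
  · intro h
    rcases h with rfl|rfl|rfl|rfl|rfl|rfl|rfl|rfl|rfl|rfl|rfl|rfl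
    · rw [multpt0]; norm_num
    · rw [multpt1]; norm_num
    · rw [multpt2]; norm_num
    · rw [multpt3]; norm_num
    · rw [multpt4]; norm_num
    · rw [multpt5]; norm_num
    · rw [multpt6]; norm_num
    · rw [multpt7]; norm_num
    · rw [multpt8]
    · rw [multpt9]
    · rw [multpt10]
    · rw [multpt11]

lemma tk2val : tk LL 2 = 4 := by
  unfold tk
  have he : {P : PPoint ℂ | mult LL P = 2} = (↑(({pt8, pt9, pt10, pt11}) : Finset (PPoint ℂ)) : Set (PPoint ℂ)) := by
    ext P
    simp only [Set.mem_setOf_eq, Finset.coe_insert, Set.mem_insert_iff,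
      Finset.coe_singleton, Set.mem_singleton_iff]
    constructor
    · intro h
      have hP : P ∈ SingPts LL := by
        simp only [SingPts, Set.mem_setOf_eq]
        omega
      rw [singeq] at hP
      unfold S12 at hP
      simp only [Finset.coe_insert, Set.mem_insert_iff, Finset.coe_singleton,
        Set.mem_singleton_iff] at hP
      rcases hP with rfl|rfl|rfl|rfl|rfl|rfl|rfl|rfl|rfl|rfl|rfl|rfl
      · rw [multpt0] at h; exact absurd h (by norm_num)
      · rw [multpt1] at h; exact absurd h (by norm_num)
      · rw [multpt2] at h; exact absurd h (by norm_num)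
      · rw [multpt3] at h; exact absurd h (by norm_num)
      · rw [multpt4] at h; exact absurd h (by norm_num)
      · rw [multpt5] at h; exact absurd h (by norm_num)
      · rw [multpt6] at h; exact absurd h (by norm_num)
      · rw [multpt7] at h; exact absurd h (by norm_num)
      · exact Or.inl (rfl)
      · exact Or.inr (Or.inl (rfl))
      · exact Or.inr (Or.inr (Or.inl (rfl)))
      · exact Or.inr (Or.inr (Or.inr (rfl)))
    · intro h
      rcases h with rfl|rfl|rfl|rfl
      · exact multpt8
      · exact multpt9
      · exact multpt10
      · exact multpt11
  rw [he, Set.ncard_coe_finset]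
  rw [Finset.card_insert_of_notMem (by simp only [Finset.mem_insert, Finset.mem_singleton]; push_neg; exact ⟨pne_8_9, pne_8_10, pne_8_11⟩),
    Finset.card_insert_of_notMem (by simp only [Finset.mem_insert, Finset.mem_singleton]; push_neg; exact ⟨pne_9_10, pne_9_11⟩),
    Finset.card_insert_of_notMem (by simp only [Finset.mem_singleton]; exact pne_10_11), Finset.card_singleton]

lemma tk3val : tk LL 3 = 8 := by
  unfold tk
  have he : {P : PPoint ℂ | mult LL P = 3} = (↑(({pt0, pt1, pt2, pt3, pt4, pt5, pt6, pt7}) : Finset (PPoint ℂ)) : Set (PPoint ℂ)) := by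
    ext P
    simp only [Set.mem_setOf_eq, Finset.coe_insert, Set.mem_insert_iff,
      Finset.coe_singleton, Set.mem_singleton_iff]
    constructor
    · intro h
      have hP : P ∈ SingPts LL := by
        simp only [SingPts, Set.mem_setOf_eq]
        omega
      rw [singeq] at hP
      unfold S12 at hP
      simp only [Finset.coe_insert, Set.mem_insert_iff, Finset.coe_singleton,
        Set.mem_singleton_iff] at hP
      rcases hP with rfl|rfl|rfl|rfl|rfl|rfl|rfl|rfl|rfl|rfl|rfl|rfl
      · exact Or.inl (rfl)
      · exact Or.inr (Or.inl (rfl))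
      · exact Or.inr (Or.inr (Or.inl (rfl)))
      · exact Or.inr (Or.inr (Or.inr (Or.inl (rfl))))
      · exact Or.inr (Or.inr (Or.inr (Or.inr (Or.inl (rfl)))))
      · exact Or.inr (Or.inr (Or.inr (Or.inr (Or.inr (Or.inl (rfl))))))
      · exact Or.inr (Or.inr (Or.inr (Or.inr (Or.inr (Or.inr (Or.inl (rfl)))))))
      · exact Or.inr (Or.inr (Or.inr (Or.inr (Or.inr (Or.inr (Or.inr (rfl)))))))
      · rw [multpt8] at h; exact absurd h (by norm_num)
      · rw [multpt9] at h; exact absurd h (by norm_num)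
      · rw [multpt10] at h; exact absurd h (by norm_num)
      · rw [multpt11] at h; exact absurd h (by norm_num)
    · intro h
      rcases h with rfl|rfl|rfl|rfl|rfl|rfl|rfl|rfl
      · exact multpt0
      · exact multpt1
      · exact multpt2
      · exact multpt3
      · exact multpt4
      · exact multpt5
      · exact multpt6
      · exact multpt7
  rw [he, Set.ncard_coe_finset]
  rw [Finset.card_insert_of_notMem (by simp only [Finset.mem_insert, Finset.mem_singleton]; push_neg; exact ⟨pne_0_1, pne_0_2, pne_0_3, pne_0_4, pne_0_5, pne_0_6, pne_0_7⟩),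
    Finset.card_insert_of_notMem (by simp only [Finset.mem_insert, Finset.mem_singleton]; push_neg; exact ⟨pne_1_2, pne_1_3, pne_1_4, pne_1_5, pne_1_6, pne_1_7⟩),
    Finset.card_insert_of_notMem (by simp only [Finset.mem_insert, Finset.mem_singleton]; push_neg; exact ⟨pne_2_3, pne_2_4, pne_2_5, pne_2_6, pne_2_7⟩),
    Finset.card_insert_of_notMem (by simp only [Finset.mem_insert, Finset.mem_singleton]; push_neg; exact ⟨pne_3_4, pne_3_5, pne_3_6, pne_3_7⟩),
    Finset.card_insert_of_notMem (by simp only [Finset.mem_insert, Finset.mem_singleton]; push_neg; exact ⟨pne_4_5, pne_4_6, pne_4_7⟩),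
    Finset.card_insert_of_notMem (by simp only [Finset.mem_insert, Finset.mem_singleton]; push_neg; exact ⟨pne_5_6, pne_5_7⟩),
    Finset.card_insert_of_notMem (by simp only [Finset.mem_singleton]; exact pne_6_7), Finset.card_singleton]

lemma hsumS12 : ∑ P ∈ S12, (mult LL P : ℚ)^2 = 88 := by
  unfold S12
  rw [Finset.sum_insert (by simp only [Finset.mem_insert, Finset.mem_singleton]; push_neg; exact ⟨pne_0_1, pne_0_2, pne_0_3, pne_0_4, pne_0_5, pne_0_6, pne_0_7, pne_0_8, pne_0_9, pne_0_10, pne_0_11⟩),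
    Finset.sum_insert (by simp only [Finset.mem_insert, Finset.mem_singleton]; push_neg; exact ⟨pne_1_2, pne_1_3, pne_1_4, pne_1_5, pne_1_6, pne_1_7, pne_1_8, pne_1_9, pne_1_10, pne_1_11⟩),
    Finset.sum_insert (by simp only [Finset.mem_insert, Finset.mem_singleton]; push_neg; exact ⟨pne_2_3, pne_2_4, pne_2_5, pne_2_6, pne_2_7, pne_2_8, pne_2_9, pne_2_10, pne_2_11⟩),
    Finset.sum_insert (by simp only [Finset.mem_insert, Finset.mem_singleton]; push_neg; exact ⟨pne_3_4, pne_3_5, pne_3_6, pne_3_7, pne_3_8, pne_3_9, pne_3_10, pne_3_11⟩),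
    Finset.sum_insert (by simp only [Finset.mem_insert, Finset.mem_singleton]; push_neg; exact ⟨pne_4_5, pne_4_6, pne_4_7, pne_4_8, pne_4_9, pne_4_10, pne_4_11⟩),
    Finset.sum_insert (by simp only [Finset.mem_insert, Finset.mem_singleton]; push_neg; exact ⟨pne_5_6, pne_5_7, pne_5_8, pne_5_9, pne_5_10, pne_5_11⟩),
    Finset.sum_insert (by simp only [Finset.mem_insert, Finset.mem_singleton]; push_neg; exact ⟨pne_6_7, pne_6_8, pne_6_9, pne_6_10, pne_6_11⟩),
    Finset.sum_insert (by simp only [Finset.mem_insert, Finset.mem_singleton]; push_neg; exact ⟨pne_7_8, pne_7_9, pne_7_10, pne_7_11⟩),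
    Finset.sum_insert (by simp only [Finset.mem_insert, Finset.mem_singleton]; push_neg; exact ⟨pne_8_9, pne_8_10, pne_8_11⟩),
    Finset.sum_insert (by simp only [Finset.mem_insert, Finset.mem_singleton]; push_neg; exact ⟨pne_9_10, pne_9_11⟩),
    Finset.sum_insert (by simp only [Finset.mem_singleton]; exact pne_10_11), Finset.sum_singleton]
  rw [multpt0, multpt1, multpt2, multpt3, multpt4, multpt5, multpt6, multpt7, multpt8, multpt9, multpt10, multpt11]
  norm_num

lemma HLval : HL LL = -2 := by
  unfold HL
  rw [hcardLL, singeq, finsum_mem_coe_finset, Set.ncard_coe_finset, hS12card, hsumS12]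
  norm_num

lemma part2 : ∃ 𝓛 : Finset (PLine ℂ), 𝓛.card = 8 ∧ tk 𝓛 2 = 4 ∧ tk 𝓛 3 = 8 ∧ HL 𝓛 = -2 :=
  ⟨LL, hcardLL, tk2val, tk3val, HLval⟩

end MK
/-- The absolute linear Harbourne constant for `8` lines equals `−2`, attained over `ℂ`
by the Möbius–Kantor configuration with `t₂ = 4`, `t₃ = 8`. -/
theorem HL_eight_lines :
    (∀ (K : Type*) [Field K] (𝓛 : Finset (PLine K)), 𝓛.card = 8 → -2 ≤ HL 𝓛) ∧
    (∃ 𝓛 : Finset (PLine ℂ), 𝓛.card = 8 ∧ tk 𝓛 2 = 4 ∧ tk 𝓛 3 = 8 ∧ HL 𝓛 = -2) := by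
  exact ⟨fun K _ 𝓛 h => KeyProof.part1 𝓛 h, MK.part2⟩
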